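/- arXiv:2103.00403 — 6 statements merged into one kernel-verified Lean document; each statement's English description precedes it below -/
import Mathlib

section
/- If G1 and G2 are 2-cographs on disjoint vertex sets, then any 1-sum of G1 and G2 (obtained by identifying a vertex of G1 with a vertex of G2) is a 2-cograph. -/
/-- A graph is 2-connected if it has at least 3 vertices, is connected,
and remains connected after deleting any single vertex. -/
def TwoConnected {V : Type} [Fintype V] (G : SimpleGraph V) : Prop :=
  3 ≤ Fintype.card V ∧ G.Connected ∧
    ∀ v : V, (G.induce ({v}ᶜ : Set V)).Connected

/-- A graph is a 2-cograph if it has no induced subgraph `H` such that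
both `H` and its complement are 2-connected. -/
def IsTwoCograph {V : Type} [Fintype V] (G : SimpleGraph V) : Prop :=
  ∀ S : Finset V, ¬ (TwoConnected (G.induce (S : Set V)) ∧
      TwoConnected ((G.induce (S : Set V))ᶜ))

/-- A 1-sum of `G` and `H`, identifying the vertex `u` of `G` with the
vertex `w` of `H` (the identified vertex is represented by `Sum.inl u`). -/
def oneSumGraph {V W : Type} (G : SimpleGraph V) (H : SimpleGraph W) (u : V) (w : W) :
    SimpleGraph (V ⊕ {x : W // x ≠ w}) :=
  SimpleGraph.fromRel fun x y =>
    match x, y with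
    | .inl a, .inl b => G.Adj a b
    | .inr a, .inr b => H.Adj (a : W) (b : W)
    | .inl a, .inr b => a = u ∧ H.Adj w (b : W)
    | .inr _, .inl _ => False

open SimpleGraph in
private def complIso' {V V' : Type} {G : SimpleGraph V} {G' : SimpleGraph V'} (e : G ≃g G') :
    Gᶜ ≃g G'ᶜ where
  toEquiv := e.toEquiv
  map_rel_iff' := by
    intro a b
    simp only [compl_adj, ne_eq, EmbeddingLike.apply_eq_iff_eq]
    exact and_congr Iff.rfl (not_congr e.map_rel_iff)

open SimpleGraph in
private def isoInduceCompl' {V V' : Type} {G : SimpleGraph V} {G' : SimpleGraph V'} (e : G ≃g G')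
    (v : V) : (G.induce ({v}ᶜ : Set V)) ≃g (G'.induce ({e v}ᶜ : Set V')) where
  toEquiv := e.toEquiv.subtypeEquiv (fun a => by
    simp [EmbeddingLike.apply_eq_iff_eq])
  map_rel_iff' := by
    intro a b
    simp [e.map_rel_iff]

open SimpleGraph in
private lemma twoConnected_of_iso {V V' : Type} [Fintype V] [Fintype V'] {G : SimpleGraph V}
    {G' : SimpleGraph V'} (e : G ≃g G') (h : TwoConnected G) : TwoConnected G' := by
  obtain ⟨h1, h2, h3⟩ := h
  refine ⟨le_trans h1 (Fintype.card_congr e.toEquiv).le, (e.connected_iff).mp h2, ?_⟩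
  intro v
  have := h3 (e.symm v)
  have e2 := isoInduceCompl' e (e.symm v)
  rw [e.apply_symm_apply] at e2
  exact e2.connected_iff.mp this

open SimpleGraph
section adj
variable {V W : Type} {G : SimpleGraph V} {H : SimpleGraph W} {u : V} {w : W}

lemma oneSum_adj_ll {a b : V} :
    (oneSumGraph G H u w).Adj (Sum.inl a) (Sum.inl b) ↔ G.Adj a b := by
  constructor
  · rintro ⟨hne, h | h⟩
    · exact h
    · exact h.symm
  · intro h; exact ⟨by simp [G.ne_of_adj h], Or.inl h⟩

lemma oneSum_adj_rr {a b : {x : W // x ≠ w}} :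
    (oneSumGraph G H u w).Adj (Sum.inr a) (Sum.inr b) ↔ H.Adj (a : W) (b : W) := by
  constructor
  · rintro ⟨hne, h | h⟩
    · exact h
    · exact h.symm
  · intro h
    refine ⟨?_, Or.inl h⟩
    simp only [ne_eq, Sum.inr.injEq]
    intro hab; exact H.ne_of_adj h (by rw [hab])

lemma oneSum_adj_lr {a : V} {b : {x : W // x ≠ w}} :
    (oneSumGraph G H u w).Adj (Sum.inl a) (Sum.inr b) ↔ a = u ∧ H.Adj w (b : W) := by
  constructor
  · rintro ⟨hne, h | h⟩
    · exact h
    · exact h.elim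
  · intro h; exact ⟨by simp, Or.inl h⟩

lemma oneSum_adj_rl {a : {x : W // x ≠ w}} {b : V} :
    (oneSumGraph G H u w).Adj (Sum.inr a) (Sum.inl b) ↔ b = u ∧ H.Adj w (a : W) := by
  rw [SimpleGraph.adj_comm]; exact oneSum_adj_lr

end adj

lemma reach_constant {α : Type} {G : SimpleGraph α} (f : α → Bool)
    (hf : ∀ x y, G.Adj x y → f x = f y) {x y : α} (h : G.Reachable x y) : f x = f y := by
  obtain ⟨p⟩ := h
  induction p with
  | nil => rfl
  | cons h p ih => exact (hf _ _ h).trans ih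


theorem oneSum_of_twoCographs {V W : Type} [Fintype V] [Fintype W] [DecidableEq W]
    (G : SimpleGraph V) (H : SimpleGraph W) (u : V) (w : W)
    (hG : IsTwoCograph G) (hH : IsTwoCograph H) :
    IsTwoCograph (oneSumGraph G H u w) := by
  classical
  intro S ⟨h2, h2c⟩
  -- the "side" function
  set OS := oneSumGraph G H u w with hOS
  by_cases hcase1 : ∀ x ∈ S, ∃ a : V, x = Sum.inl a
  · -- all vertices on the left: isomorphic to an induced subgraph of G
    let f : V ⊕ {x : W // x ≠ w} → V := Sum.elim id (fun _ => u)
    have key : ∀ x ∈ S, Sum.inl (f x) = x := by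
      intro x hx; obtain ⟨a, rfl⟩ := hcase1 x hx; rfl
    let S' : Finset V := S.image f
    let eqv : {x // x ∈ (S : Set (V ⊕ {x : W // x ≠ w}))} ≃ {a // a ∈ (S' : Set V)} :=
      { toFun := fun x => ⟨f x.1, Finset.mem_coe.mpr
          (Finset.mem_image_of_mem f (Finset.mem_coe.mp x.2))⟩
        invFun := fun a => ⟨Sum.inl a.1, by
          obtain ⟨x, hx, hfx⟩ := Finset.mem_image.mp (Finset.mem_coe.mp a.2)
          rw [← hfx, key x hx]; exact Finset.mem_coe.mpr hx⟩
        left_inv := fun x => Subtype.ext (key x.1 (Finset.mem_coe.mp x.2))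
        right_inv := fun a => Subtype.ext rfl }
    have iso : OS.induce (S : Set _) ≃g G.induce (S' : Set V) :=
      { toEquiv := eqv
        map_rel_iff' := by
          intro x y
          obtain ⟨a, hxa⟩ := hcase1 x.1 (Finset.mem_coe.mp x.2)
          obtain ⟨b, hyb⟩ := hcase1 y.1 (Finset.mem_coe.mp y.2)
          show G.Adj (f x.1) (f y.1) ↔ OS.Adj x.1 y.1
          rw [hxa, hyb]
          exact (oneSum_adj_ll).symm }
    exact hG S' ⟨twoConnected_of_iso iso h2, twoConnected_of_iso (complIso' iso) h2c⟩
  · push_neg at hcase1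
    obtain ⟨xb, hxbS, hxb⟩ := hcase1
    obtain ⟨b, rfl⟩ : ∃ b, xb = Sum.inr b := by
      cases xb with
      | inl a => exact absurd rfl (hxb a)
      | inr b => exact ⟨b, rfl⟩
    by_cases hcase2 : ∀ x ∈ S, x = Sum.inl u ∨ ∃ c : {x : W // x ≠ w}, x = Sum.inr c
    · -- all vertices on the right (plus possibly the hub): isomorphic to induced subgraph of H
      let g : V ⊕ {x : W // x ≠ w} → W := Sum.elim (fun _ => w) Subtype.val
      let back : W → V ⊕ {x : W // x ≠ w} := fun c =>
        if h : c = w then Sum.inl u else Sum.inr ⟨c, h⟩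
      have key : ∀ x ∈ S, back (g x) = x := by
        intro x hx
        rcases hcase2 x hx with rfl | ⟨c, rfl⟩
        · simp [g, back]
        · simp [g, back, c.2]
      let S' : Finset W := S.image g
      let eqv : {x // x ∈ (S : Set (V ⊕ {x : W // x ≠ w}))} ≃ {a // a ∈ (S' : Set W)} :=
        { toFun := fun x => ⟨g x.1, Finset.mem_coe.mpr
            (Finset.mem_image_of_mem g (Finset.mem_coe.mp x.2))⟩
          invFun := fun a => ⟨back a.1, by
            obtain ⟨x, hx, hfx⟩ := Finset.mem_image.mp (Finset.mem_coe.mp a.2)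
            rw [← hfx, key x hx]; exact Finset.mem_coe.mpr hx⟩
          left_inv := fun x => Subtype.ext (key x.1 (Finset.mem_coe.mp x.2))
          right_inv := fun a => Subtype.ext (by
            by_cases h : a.1 = w <;> simp [g, back, h]) }
      have iso : OS.induce (S : Set _) ≃g H.induce (S' : Set W) :=
        { toEquiv := eqv
          map_rel_iff' := by
            intro x y
            show H.Adj (g x.1) (g y.1) ↔ OS.Adj x.1 y.1
            rcases hcase2 x.1 (Finset.mem_coe.mp x.2) with hx | ⟨c, hx⟩ <;>
              rcases hcase2 y.1 (Finset.mem_coe.mp y.2) with hy | ⟨d, hy⟩ <;>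
              rw [hx, hy]
            · simp only [g, Sum.elim_inl]
              constructor
              · intro h; exact absurd rfl (H.ne_of_adj h)
              · intro h; exact absurd rfl (OS.ne_of_adj h)
            · simp only [g, Sum.elim_inl, Sum.elim_inr]
              rw [oneSum_adj_lr]
              simp
            · simp only [g, Sum.elim_inl, Sum.elim_inr]
              rw [oneSum_adj_rl]
              rw [H.adj_comm]
              simp
            · simp only [g, Sum.elim_inr]
              exact (oneSum_adj_rr).symm }
      exact hH S' ⟨twoConnected_of_iso iso h2, twoConnected_of_iso (complIso' iso) h2c⟩
    · -- mixed case: S contains some inl a with a ≠ u and some inr b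
      push_neg at hcase2
      obtain ⟨xa, hxaS, hxa1, hxa2⟩ := hcase2
      obtain ⟨a, rfl⟩ : ∃ a, xa = Sum.inl a := by
        cases xa with
        | inl a => exact ⟨a, rfl⟩
        | inr c => exact absurd rfl (hxa2 c)
      have hau : a ≠ u := fun h => hxa1 (by rw [h])
      let side : V ⊕ {x : W // x ≠ w} → Bool := Sum.elim (fun _ => true) (fun _ => false)
      by_cases hu : Sum.inl u ∈ S
      · -- delete the hub vertex; graph becomes disconnected
        let v : {x // x ∈ (S : Set (V ⊕ {x : W // x ≠ w}))} := ⟨Sum.inl u, Finset.mem_coe.mpr hu⟩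
        have hconn := h2.2.2 v
        have hx : (⟨Sum.inl a, Finset.mem_coe.mpr hxaS⟩ : {x // x ∈ (S : Set _)}) ∈
            ({v}ᶜ : Set {x // x ∈ (S : Set (V ⊕ {x : W // x ≠ w}))}) := by
          simp only [Set.mem_compl_iff, Set.mem_singleton_iff]
          intro h
          exact hau (Sum.inl.inj (congrArg Subtype.val h))
        have hy : (⟨Sum.inr b, Finset.mem_coe.mpr hxbS⟩ : {x // x ∈ (S : Set _)}) ∈
            ({v}ᶜ : Set {x // x ∈ (S : Set (V ⊕ {x : W // x ≠ w}))}) := by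
          simp only [Set.mem_compl_iff, Set.mem_singleton_iff]
          intro h
          exact Sum.inr_ne_inl (congrArg Subtype.val h)
        have hreach := hconn.preconnected ⟨_, hx⟩ ⟨_, hy⟩
        have := reach_constant (fun z => side z.1.1) (by
          rintro ⟨⟨x, hxS⟩, hxv⟩ ⟨⟨y, hyS⟩, hyv⟩ hadj
          have hadj' : OS.Adj x y := hadj
          cases x with
          | inl c => cases y with
            | inl d => rfl
            | inr d =>
              exfalso
              obtain ⟨rfl, -⟩ := oneSum_adj_lr.mp hadj'
              exact hxv (by simp [v])
          | inr c => cases y with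
            | inl d =>
              exfalso
              obtain ⟨rfl, -⟩ := oneSum_adj_rl.mp hadj'
              exact hyv (by simp [v])
            | inr d => rfl) hreach
        simp [side] at this
      · -- hub absent: graph is already disconnected
        have hreach := h2.2.1.preconnected ⟨Sum.inl a, Finset.mem_coe.mpr hxaS⟩
          ⟨Sum.inr b, Finset.mem_coe.mpr hxbS⟩
        have := reach_constant (fun z => side z.1) (by
          rintro ⟨x, hxS⟩ ⟨y, hyS⟩ hadj
          have hadj' : OS.Adj x y := hadj
          cases x with
          | inl c => cases y with
            | inl d => rfl
            | inr d =>
              exfalso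
              obtain ⟨rfl, -⟩ := oneSum_adj_lr.mp hadj'
              exact hu (Finset.mem_coe.mp hxS)
          | inr c => cases y with
            | inl d =>
              exfalso
              obtain ⟨rfl, -⟩ := oneSum_adj_rl.mp hadj'
              exact hu (Finset.mem_coe.mp hyS)
            | inr d => rfl) hreach
        simp [side] at this
end

section
/- If G is a 2-cograph and e is an edge of G, then the simple contraction G/e is a 2-cograph. -/
/-- The simple contraction `G/uv`: the vertex `v` is removed and `u` plays
the role of the merged vertex. -/
def contractEdge {V : Type} (G : SimpleGraph V) (u v : V) :
    SimpleGraph {x : V // x ≠ v} :=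
  SimpleGraph.fromRel fun a b =>
    G.Adj a b ∨ ((a : V) = u ∧ G.Adj v b) ∨ ((b : V) = u ∧ G.Adj v (a : V))


open SimpleGraph

lemma reachable_map {α β : Type} {G₁ : SimpleGraph α} {G₂ : SimpleGraph β} (f : α → β)
    (hadj : ∀ a b, G₁.Adj a b → G₂.Reachable (f a) (f b)) {x y : α}
    (h : G₁.Reachable x y) : G₂.Reachable (f x) (f y) := by
  obtain ⟨w⟩ := h
  induction w with
  | nil => exact Reachable.refl _
  | cons ha _ ih => exact (hadj _ _ ha).trans ih

lemma connected_map {α β : Type} {G₁ : SimpleGraph α} {G₂ : SimpleGraph β} (f : α → β)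
    (hadj : ∀ a b, G₁.Adj a b → G₂.Reachable (f a) (f b))
    (hsurj : ∀ z : β, ∃ x : α, G₂.Reachable z (f x))
    (h : G₁.Connected) : G₂.Connected := by
  have hne : Nonempty α := h.nonempty
  obtain ⟨a⟩ := hne
  have : Nonempty β := ⟨f a⟩
  refine ⟨fun z w => ?_⟩
  obtain ⟨x, hx⟩ := hsurj z
  obtain ⟨y, hy⟩ := hsurj w
  exact hx.trans (((reachable_map f hadj (h.preconnected x y))).trans hy.symm)

lemma exists_adj_of_connected {α : Type} [Fintype α] {G : SimpleGraph α}
    (h : G.Connected) (hc : 2 ≤ Fintype.card α) (x : α) : ∃ y, G.Adj x y := by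
  obtain ⟨y, hy⟩ := Fintype.exists_ne_of_one_lt_card hc x
  obtain ⟨w⟩ := h.preconnected y x
  clear hc
  induction w with
  | nil => exact absurd rfl hy
  | cons ha p ih =>
    rename_i a b c
    by_cases hbc : b = c
    · subst hbc; exact ⟨a, ha.symm⟩
    · exact ih hbc

lemma connected_congr {α β : Type} {G₁ : SimpleGraph α} {G₂ : SimpleGraph β} (e : α ≃ β)
    (h : ∀ a b, G₁.Adj a b ↔ G₂.Adj (e a) (e b)) : G₁.Connected → G₂.Connected := by
  intro h1
  refine connected_map e (fun a b hab => Adj.reachable ((h a b).1 hab)) (fun z => ⟨e.symm z, ?_⟩) h1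
  rw [e.apply_symm_apply]

lemma connected_induce_congr {α β : Type} {G₁ : SimpleGraph α} {G₂ : SimpleGraph β} (e : α ≃ β)
    (h : ∀ a b, G₁.Adj a b ↔ G₂.Adj (e a) (e b)) (w : β)
    (hc : (G₁.induce ({e.symm w}ᶜ : Set α)).Connected) :
    (G₂.induce ({w}ᶜ : Set β)).Connected := by
  have hmap : ∀ a : α, a ≠ e.symm w → e a ≠ w := by
    intro a ha hc; exact ha (by rw [← hc, e.symm_apply_apply])
  refine connected_map (fun x => ⟨e x.1, hmap x.1 x.2⟩) ?_ ?_ hc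
  · rintro ⟨a, ha⟩ ⟨b, hb⟩ hab
    exact Adj.reachable (by simpa using (h a b).1 (by simpa using hab))
  · rintro ⟨z, hz⟩
    have hzw : e.symm z ≠ e.symm w := fun hc => hz (by simpa using e.symm.injective hc)
    refine ⟨⟨e.symm z, hzw⟩, ?_⟩
    have : (⟨e (e.symm z), hmap _ hzw⟩ : ({w}ᶜ : Set β)) = ⟨z, hz⟩ :=
      Subtype.ext (e.apply_symm_apply z)
    convert Reachable.refl (⟨z, hz⟩ : ({w}ᶜ : Set β)) using 2

lemma twoConnected_congr {α β : Type} [Fintype α] [Fintype β] {G₁ : SimpleGraph α}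
    {G₂ : SimpleGraph β} (e : α ≃ β)
    (h : ∀ a b, G₁.Adj a b ↔ G₂.Adj (e a) (e b)) : TwoConnected G₁ → TwoConnected G₂ := by
  rintro ⟨hcard, hconn, hdel⟩
  refine ⟨(Fintype.card_congr e) ▸ hcard, connected_congr e h hconn, fun w => ?_⟩
  exact connected_induce_congr e h w (hdel (e.symm w))

section Contract

variable {W : Type} (K : SimpleGraph W) (u v : W)

lemma cA (a b : {x : W // x ≠ v}) (ha : (a : W) ≠ u) (hb : (b : W) ≠ u) :
    (contractEdge K u v).Adj a b ↔ K.Adj (a : W) (b : W) := by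
  rw [contractEdge, SimpleGraph.fromRel_adj]
  constructor
  · rintro ⟨hne, (h | ⟨h, -⟩ | ⟨h, -⟩) | (h | ⟨h, -⟩ | ⟨h, -⟩)⟩
    · exact h
    · exact absurd h ha
    · exact absurd h hb
    · exact h.symm
    · exact absurd h hb
    · exact absurd h ha
  · intro hadj
    exact ⟨fun hc => K.irrefl (hc ▸ hadj), Or.inl (Or.inl hadj)⟩

lemma cB (hune : u ≠ v) (b : {x : W // x ≠ v}) (hb : (b : W) ≠ u) :
    (contractEdge K u v).Adj ⟨u, hune⟩ b ↔ K.Adj u (b : W) ∨ K.Adj v (b : W) := by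
  rw [contractEdge, SimpleGraph.fromRel_adj]
  constructor
  · rintro ⟨hne, (h | ⟨-, h⟩ | ⟨h, -⟩) | (h | ⟨h, -⟩ | ⟨-, h⟩)⟩
    · exact Or.inl h
    · exact Or.inr h
    · exact absurd h hb
    · exact Or.inl h.symm
    · exact absurd h hb
    · exact Or.inr h
  · intro hadj
    refine ⟨fun hc => hb (by rw [← hc]), ?_⟩
    rcases hadj with h | h
    · exact Or.inl (Or.inl h)
    · exact Or.inl (Or.inr (Or.inl ⟨rfl, h⟩))

lemma ccA (a b : {x : W // x ≠ v}) (ha : (a : W) ≠ u) (hb : (b : W) ≠ u) :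
    (contractEdge K u v)ᶜ.Adj a b ↔ Kᶜ.Adj (a : W) (b : W) := by
  rw [SimpleGraph.compl_adj, SimpleGraph.compl_adj, cA K u v a b ha hb]
  constructor
  · rintro ⟨hne, h⟩
    exact ⟨fun hc => hne (Subtype.ext hc), h⟩
  · rintro ⟨hne, h⟩
    exact ⟨fun hc => hne (congrArg Subtype.val hc), h⟩

lemma ccB (hune : u ≠ v) (b : {x : W // x ≠ v}) (hb : (b : W) ≠ u) :
    (contractEdge K u v)ᶜ.Adj ⟨u, hune⟩ b ↔ ¬K.Adj u (b : W) ∧ ¬K.Adj v (b : W) := by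
  rw [SimpleGraph.compl_adj, cB K u v hune b hb]
  constructor
  · rintro ⟨-, h⟩
    exact ⟨fun hc => h (Or.inl hc), fun hc => h (Or.inr hc)⟩
  · rintro ⟨h1, h2⟩
    refine ⟨fun hc => hb ?_, fun hc => hc.elim h1 h2⟩
    · rw [← hc]

end Contract

section LemB

variable {W : Type} [Fintype W] [DecidableEq W]

lemma lemB (K : SimpleGraph W) (u v : W) (huv : K.Adj u v)
    (b : W) (hbu : b ≠ u) (hbv : K.Adj v b) (hbn : ¬K.Adj u b)
    (c : W) (hcv' : c ≠ v) (hcu : K.Adj u c) (hcn : ¬K.Adj v c)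
    (h1 : TwoConnected (contractEdge K u v))
    (h2 : TwoConnected (contractEdge K u v)ᶜ) :
    TwoConnected K ∧ TwoConnected Kᶜ := by
  have hune : u ≠ v := huv.ne
  set H := contractEdge K u v with hH
  set u' : {x : W // x ≠ v} := ⟨u, hune⟩ with hu'
  have hbv' : b ≠ v := fun hc => K.irrefl (hc ▸ hbv)
  have hcu' : c ≠ u := fun hc => K.irrefl (hc ▸ hcu)
  have hcard3 : 3 ≤ Fintype.card {x : W // x ≠ v} := h1.1
  have hcard : 3 ≤ Fintype.card W :=
    le_trans hcard3 (Fintype.card_le_of_injective _ Subtype.val_injective)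
  -- case split for H-adjacency
  have hsplit : ∀ (x y : {x : W // x ≠ v}), H.Adj x y →
      ((x : W) ≠ u ∧ (y : W) ≠ u ∧ K.Adj (x : W) (y : W)) ∨
      ((x : W) = u ∧ (y : W) ≠ u ∧ (K.Adj u (y : W) ∨ K.Adj v (y : W))) ∨
      ((y : W) = u ∧ (x : W) ≠ u ∧ (K.Adj u (x : W) ∨ K.Adj v (x : W))) := by
    intro x y hxy
    by_cases hx : (x : W) = u
    · have hy : (y : W) ≠ u := by
        intro hyu
        exact hxy.ne (Subtype.ext (hx.trans hyu.symm))
      have hxu : x = u' := Subtype.ext hx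
      subst hxu
      exact Or.inr (Or.inl ⟨rfl, hy, (cB K u v hune y hy).1 hxy⟩)
    · by_cases hy : (y : W) = u
      · have hyu : y = u' := Subtype.ext hy
        subst hyu
        exact Or.inr (Or.inr ⟨rfl, hx, (cB K u v hune x hx).1 hxy.symm⟩)
      · exact Or.inl ⟨hx, hy, (cA K u v x y hx hy).1 hxy⟩
  have hsplitc : ∀ (x y : {x : W // x ≠ v}), Hᶜ.Adj x y →
      ((x : W) ≠ u ∧ (y : W) ≠ u ∧ Kᶜ.Adj (x : W) (y : W)) ∨
      ((x : W) = u ∧ Kᶜ.Adj u (y : W) ∧ Kᶜ.Adj v (y : W)) ∨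
      ((y : W) = u ∧ Kᶜ.Adj u (x : W) ∧ Kᶜ.Adj v (x : W)) := by
    intro x y hxy
    by_cases hx : (x : W) = u
    · have hy : (y : W) ≠ u := by
        intro hyu
        exact hxy.ne (Subtype.ext (hx.trans hyu.symm))
      have hxu : x = u' := Subtype.ext hx
      subst hxu
      obtain ⟨hn1, hn2⟩ := (ccB K u v hune y hy).1 hxy
      exact Or.inr (Or.inl ⟨rfl, ⟨Ne.symm hy, hn1⟩, ⟨Ne.symm y.2, hn2⟩⟩)
    · by_cases hy : (y : W) = u
      · have hyu : y = u' := Subtype.ext hy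
        subst hyu
        obtain ⟨hn1, hn2⟩ := (ccB K u v hune x hx).1 hxy.symm
        exact Or.inr (Or.inr ⟨rfl, ⟨Ne.symm hx, hn1⟩, ⟨Ne.symm x.2, hn2⟩⟩)
      · exact Or.inl ⟨hx, hy, (ccA K u v x y hx hy).1 hxy⟩
  have goal1 : K.Connected := by
    refine connected_map (Subtype.val : {x : W // x ≠ v} → W) ?_ ?_ h1.2.1
    · intro x y hxy
      rcases hsplit x y hxy with ⟨-, -, h⟩ | ⟨hx, -, h | h⟩ | ⟨hy, -, h | h⟩
      · exact h.reachable
      · exact (hx ▸ h).reachable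
      · exact Reachable.trans (hx ▸ huv.reachable) h.reachable
      · exact (hy ▸ h).symm.reachable
      · exact Reachable.trans h.symm.reachable (hy ▸ huv.symm.reachable)
    · intro z
      by_cases hz : z = v
      · exact ⟨u', by rw [hz]; exact huv.symm.reachable⟩
      · exact ⟨⟨z, hz⟩, Reachable.refl _⟩
  have goal2 : ∀ ch : W, (K.induce ({ch}ᶜ : Set W)).Connected := by
    intro ch
    by_cases hchv : ch = v
    · rw [hchv]
      refine connected_map
        (fun x : ({u'}ᶜ : Set {x : W // x ≠ v}) =>
          (⟨(x : {x : W // x ≠ v}), (x : {x : W // x ≠ v}).2⟩ : ({v}ᶜ : Set W)))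
        ?_ ?_ (h1.2.2 u')
      · rintro ⟨x, hx⟩ ⟨y, hy⟩ hxy
        have hxu : (x : W) ≠ u := fun hc => hx (Subtype.ext hc)
        have hyu : (y : W) ≠ u := fun hc => hy (Subtype.ext hc)
        have : K.Adj (x : W) (y : W) := (cA K u v x y hxu hyu).1 (by simpa using hxy)
        exact Adj.reachable (by simpa using this)
      · rintro ⟨z, hz⟩
        by_cases hzu : z = u
        · refine ⟨⟨⟨c, hcv'⟩, fun hc => hcu' (congrArg Subtype.val hc)⟩, ?_⟩
          exact Adj.reachable (by simp only [SimpleGraph.comap_adj]; exact hzu ▸ hcu)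
        · exact ⟨⟨⟨z, hz⟩, fun hc => hzu (congrArg Subtype.val hc)⟩, Reachable.refl _⟩
    · by_cases hchu : ch = u
      · rw [hchu]
        refine connected_map
          (fun x : ({u'}ᶜ : Set {x : W // x ≠ v}) =>
            (⟨((x : {x : W // x ≠ v}) : W), fun hc => x.2 (Subtype.ext hc)⟩ : ({u}ᶜ : Set W)))
          ?_ ?_ (h1.2.2 u')
        · rintro ⟨x, hx⟩ ⟨y, hy⟩ hxy
          have hxu : (x : W) ≠ u := fun hc => hx (Subtype.ext hc)
          have hyu : (y : W) ≠ u := fun hc => hy (Subtype.ext hc)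
          have : K.Adj (x : W) (y : W) := (cA K u v x y hxu hyu).1 (by simpa using hxy)
          exact Adj.reachable (by simpa using this)
        · rintro ⟨z, hz⟩
          have hz' : z ≠ u := hz
          by_cases hzv : z = v
          · refine ⟨⟨⟨b, hbv'⟩, fun hc => hbu (congrArg Subtype.val hc)⟩, ?_⟩
            exact Adj.reachable (by simp only [SimpleGraph.comap_adj]; exact hzv ▸ hbv)
          · exact ⟨⟨⟨z, hzv⟩, fun hc => hz' (congrArg Subtype.val hc)⟩, Reachable.refl _⟩
      · -- ch ∉ {u, v}
        have hc' : (⟨ch, hchv⟩ : {x : W // x ≠ v}) ≠ u' := fun hc => hchu (congrArg Subtype.val hc)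
        refine connected_map
          (fun x : ({(⟨ch, hchv⟩ : {x : W // x ≠ v})}ᶜ : Set {x : W // x ≠ v}) =>
            (⟨((x : {x : W // x ≠ v}) : W),
              fun hc => x.2 (Subtype.ext (a1 := (x : {x : W // x ≠ v})) (a2 := ⟨ch, hchv⟩) hc)⟩ : ({ch}ᶜ : Set W)))
          ?_ ?_ (h1.2.2 ⟨ch, hchv⟩)
        · rintro ⟨x, hx⟩ ⟨y, hy⟩ hxy
          have hxc : (x : W) ≠ ch := fun hc => hx (Subtype.ext (a2 := ⟨ch, hchv⟩) hc)
          have hyc : (y : W) ≠ ch := fun hc => hy (Subtype.ext (a2 := ⟨ch, hchv⟩) hc)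
          have hxy' : H.Adj x y := by simpa using hxy
          have hvch : v ≠ ch := fun hc => hchv hc.symm
          rcases hsplit x y hxy' with ⟨-, -, h⟩ | ⟨hx1, -, h | h⟩ | ⟨hy1, -, h | h⟩
          · exact Adj.reachable (by simpa using h)
          · exact Adj.reachable (by simp only [SimpleGraph.comap_adj]; exact hx1 ▸ h)
          · refine Reachable.trans (Adj.reachable (u := (⟨(x:W), hxc⟩ : ({ch}ᶜ : Set W)))
              (v := ⟨v, hvch⟩) ?_) (Adj.reachable ?_)
            · simp only [SimpleGraph.comap_adj]; exact hx1 ▸ huv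
            · simp only [SimpleGraph.comap_adj]; exact h
          · exact Adj.reachable (by simp only [SimpleGraph.comap_adj]; exact hy1 ▸ h.symm)
          · refine Reachable.trans (Adj.reachable (u := (⟨(x:W), hxc⟩ : ({ch}ᶜ : Set W)))
              (v := ⟨v, hvch⟩) ?_) (Adj.reachable ?_)
            · simp only [SimpleGraph.comap_adj]; exact h.symm
            · simp only [SimpleGraph.comap_adj]; exact hy1 ▸ huv.symm
        · rintro ⟨z, hz⟩
          have hz' : z ≠ ch := hz
          by_cases hzv : z = v
          · refine ⟨⟨u', fun hc => hc' (Set.mem_singleton_iff.1 hc).symm⟩, ?_⟩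
            refine Adj.reachable ?_
            simp only [SimpleGraph.comap_adj]
            exact hzv ▸ huv.symm
          · exact ⟨⟨⟨z, hzv⟩, fun hc =>
              hz' (congrArg Subtype.val (Set.mem_singleton_iff.1 hc))⟩, Reachable.refl _⟩
  have hKcvb : Kᶜ.Adj v c := ⟨fun hc => hcv' hc.symm, fun hc => hcn hc⟩
  have goal3 : Kᶜ.Connected := by
    refine connected_map (Subtype.val : {x : W // x ≠ v} → W) ?_ ?_ h2.2.1
    · intro x y hxy
      rcases hsplitc x y hxy with ⟨-, -, h⟩ | ⟨hx, h, -⟩ | ⟨hy, h, -⟩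
      · exact h.reachable
      · exact (hx ▸ h).reachable
      · exact (hy ▸ h).symm.reachable
    · intro z
      by_cases hz : z = v
      · exact ⟨⟨c, hcv'⟩, by rw [hz]; exact hKcvb.reachable⟩
      · exact ⟨⟨z, hz⟩, Reachable.refl _⟩
  have goal4 : ∀ ch : W, (Kᶜ.induce ({ch}ᶜ : Set W)).Connected := by
    intro ch
    by_cases hchv : ch = v
    · rw [hchv]
      refine connected_map
        (fun x : {x : W // x ≠ v} => (⟨(x : W), x.2⟩ : ({v}ᶜ : Set W))) ?_ ?_ h2.2.1
      · intro x y hxy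
        rcases hsplitc x y hxy with ⟨-, -, h⟩ | ⟨hx, h, -⟩ | ⟨hy, h, -⟩
        · exact Adj.reachable (by simpa using h)
        · exact Adj.reachable (by simp only [SimpleGraph.comap_adj]; exact hx ▸ h)
        · exact Adj.reachable (by simp only [SimpleGraph.comap_adj]; exact (hy ▸ h).symm)
      · rintro ⟨z, hz⟩
        exact ⟨⟨z, hz⟩, Reachable.refl _⟩
    · by_cases hchu : ch = u
      · rw [hchu]
        refine connected_map
          (fun x : ({u'}ᶜ : Set {x : W // x ≠ v}) =>
            (⟨((x : {x : W // x ≠ v}) : W), fun hc => x.2 (Subtype.ext hc)⟩ : ({u}ᶜ : Set W)))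
          ?_ ?_ (h2.2.2 u')
        · rintro ⟨x, hx⟩ ⟨y, hy⟩ hxy
          have hxu : (x : W) ≠ u := fun hc => hx (Subtype.ext hc)
          have hyu : (y : W) ≠ u := fun hc => hy (Subtype.ext hc)
          have : Kᶜ.Adj (x : W) (y : W) := (ccA K u v x y hxu hyu).1 (by simpa using hxy)
          exact Adj.reachable (by simpa using this)
        · rintro ⟨z, hz⟩
          have hz' : z ≠ u := hz
          by_cases hzv : z = v
          · refine ⟨⟨⟨c, hcv'⟩, fun hc => hcu' (congrArg Subtype.val hc)⟩, ?_⟩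
            exact Adj.reachable (by simp only [SimpleGraph.comap_adj]; exact hzv ▸ hKcvb)
          · exact ⟨⟨⟨z, hzv⟩, fun hc => hz' (congrArg Subtype.val hc)⟩, Reachable.refl _⟩
      · -- ch ∉ {u, v}
        have hc' : u' ≠ (⟨ch, hchv⟩ : {x : W // x ≠ v}) :=
          fun hc => hchu (congrArg Subtype.val hc).symm
        have hcard2 : 2 ≤ Fintype.card ({(⟨ch, hchv⟩ : {x : W // x ≠ v})}ᶜ : Set {x : W // x ≠ v}) := by
          have h5 : Fintype.card ({(⟨ch, hchv⟩ : {x : W // x ≠ v})}ᶜ : Set {x : W // x ≠ v})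
              = Fintype.card {x : W // x ≠ v} - 1 := by
            rw [Fintype.card_compl_set]
            simp
          omega
        obtain ⟨b₀, hb₀⟩ := exists_adj_of_connected (h2.2.2 ⟨ch, hchv⟩) hcard2
          ⟨u', fun hc => hc' (Set.mem_singleton_iff.1 hc)⟩
        have hb₀' : Hᶜ.Adj u' ((b₀ : {x : W // x ≠ v})) := by simpa using hb₀
        have hb₀u : ((b₀ : {x : W // x ≠ v}) : W) ≠ u :=
          fun hc => hb₀'.ne (Subtype.ext hc.symm)
        obtain ⟨hn1, hn2⟩ := (ccB K u v hune _ hb₀u).1 hb₀'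
        refine connected_map
          (fun x : ({(⟨ch, hchv⟩ : {x : W // x ≠ v})}ᶜ : Set {x : W // x ≠ v}) =>
            (⟨((x : {x : W // x ≠ v}) : W),
              fun hc => x.2 (Subtype.ext (a1 := (x : {x : W // x ≠ v})) (a2 := ⟨ch, hchv⟩) hc)⟩ : ({ch}ᶜ : Set W)))
          ?_ ?_ (h2.2.2 ⟨ch, hchv⟩)
        · rintro ⟨x, hx⟩ ⟨y, hy⟩ hxy
          have hxy' : Hᶜ.Adj x y := by simpa using hxy
          rcases hsplitc x y hxy' with ⟨-, -, h⟩ | ⟨hx1, h, -⟩ | ⟨hy1, h, -⟩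
          · exact Adj.reachable (by simpa using h)
          · exact Adj.reachable (by simp only [SimpleGraph.comap_adj]; exact hx1 ▸ h)
          · exact Adj.reachable (by simp only [SimpleGraph.comap_adj]; exact (hy1 ▸ h).symm)
        · rintro ⟨z, hz⟩
          have hz' : z ≠ ch := hz
          by_cases hzv : z = v
          · refine ⟨b₀, ?_⟩
            refine Adj.reachable ?_
            simp only [SimpleGraph.comap_adj]
            exact hzv ▸ (⟨fun hc => (b₀ : {x : W // x ≠ v}).2 hc.symm, hn2⟩ : Kᶜ.Adj v _)
          · exact ⟨⟨⟨z, hzv⟩, fun hc =>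
              hz' (congrArg Subtype.val (Set.mem_singleton_iff.1 hc))⟩, Reachable.refl _⟩
  exact ⟨⟨hcard, goal1, goal2⟩, ⟨hcard, goal3, goal4⟩⟩



end LemB

lemma compl_adj_congr {α β : Type} {G₁ : SimpleGraph α} {G₂ : SimpleGraph β} (e : α ≃ β)
    (h : ∀ a b, G₁.Adj a b ↔ G₂.Adj (e a) (e b)) :
    ∀ a b, G₁ᶜ.Adj a b ↔ G₂ᶜ.Adj (e a) (e b) := by
  intro a b
  rw [SimpleGraph.compl_adj, SimpleGraph.compl_adj, h a b, e.injective.ne_iff]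

theorem contraction_of_twoCograph {V : Type} [Fintype V] [DecidableEq V]
    (G : SimpleGraph V) (hG : IsTwoCograph G) (u v : V) (h : G.Adj u v) :
    IsTwoCograph (contractEdge G u v) := by
  intro S hS
  have hune : u ≠ v := h.ne
  set u' : {x : V // x ≠ v} := ⟨u, hune⟩ with hu'def
  -- shared machinery for the "easy" cases
  have key : (∀ (a b : ((S : Set {x : V // x ≠ v}))),
      ((contractEdge G u v).induce (S : Set {x : V // x ≠ v})).Adj a b ↔ G.Adj ↑↑a ↑↑b) → False := by
    intro hAdjIff
    set T : Finset V := S.image Subtype.val with hT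
    have hmemT : ∀ x : ((S : Set {x : V // x ≠ v})), ((x : {x : V // x ≠ v}) : V) ∈ (T : Set V) := by
      intro x
      simp only [hT, Finset.coe_image, Set.mem_image, Finset.mem_coe]
      exact ⟨↑x, x.2, rfl⟩
    have hbij : Function.Bijective
        (fun x : ((S : Set {x : V // x ≠ v})) => (⟨↑↑x, hmemT x⟩ : ((T : Set V)))) := by
      constructor
      · intro x y hxy
        simp only [Subtype.mk.injEq] at hxy
        exact Subtype.ext (Subtype.ext hxy)
      · rintro ⟨y, hy⟩
        have hy' := hy
        simp only [hT, Finset.coe_image, Set.mem_image, Finset.mem_coe] at hy'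
        obtain ⟨a, ha, rfl⟩ := hy'
        exact ⟨⟨a, ha⟩, rfl⟩
    set e := Equiv.ofBijective _ hbij with he
    have hiff : ∀ (a b : ((S : Set {x : V // x ≠ v}))),
        ((contractEdge G u v).induce (S : Set {x : V // x ≠ v})).Adj a b ↔
          (G.induce (T : Set V)).Adj (e a) (e b) := by
      intro a b
      rw [hAdjIff a b]
      rfl
    exact hG T ⟨twoConnected_congr e hiff hS.1,
      twoConnected_congr e (compl_adj_congr e hiff) hS.2⟩
  by_cases hu'S : u' ∈ S
  · by_cases hcaseA : ∀ a : {x : V // x ≠ v}, a ∈ S → a ≠ u' → (G.Adj v ↑a → G.Adj u ↑a)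
    · refine key ?_
      rintro ⟨a, ha⟩ ⟨b, hb⟩
      rw [show ((contractEdge G u v).induce (S : Set {x : V // x ≠ v})).Adj ⟨a, ha⟩ ⟨b, hb⟩ ↔
        (contractEdge G u v).Adj a b from Iff.rfl]
      by_cases hau : (a : V) = u
      · have ha' : a = u' := Subtype.ext hau
        subst ha'
        by_cases hbu : (b : V) = u
        · have hb' : b = u' := Subtype.ext hbu
          subst hb'
          simp [SimpleGraph.irrefl]
        · rw [cB G u v hune b hbu]
          constructor
          · rintro (h1 | h1)
            · exact hau ▸ h1
            · exact hau ▸ hcaseA b hb (fun hc => hbu (congrArg Subtype.val hc)) h1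
          · exact fun h1 => Or.inl (hau ▸ h1)
      · by_cases hbu : (b : V) = u
        · have hb' : b = u' := Subtype.ext hbu
          subst hb'
          rw [SimpleGraph.adj_comm, G.adj_comm]
          rw [cB G u v hune a hau]
          constructor
          · rintro (h1 | h1)
            · exact hbu ▸ h1
            · exact hbu ▸ hcaseA a ha (fun hc => hau (congrArg Subtype.val hc)) h1
          · exact fun h1 => Or.inl (hbu ▸ h1)
        · exact cA G u v a b hau hbu
    · push_neg at hcaseA
      obtain ⟨b₀, hb₀S, hb₀u, hb₀v, hb₀n⟩ := hcaseA
      by_cases hcaseB : ∀ a : {x : V // x ≠ v}, a ∈ S → a ≠ u' → (G.Adj u ↑a → G.Adj v ↑a)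
      · -- replace u by v
        set T : Finset V := (S.erase u').image Subtype.val ∪ {v} with hT
        have hvT : v ∈ (T : Set V) := by simp [hT]
        have hmemT : ∀ x : ((S : Set {x : V // x ≠ v})), (x : {x : V // x ≠ v}) ≠ u' →
            ((x : {x : V // x ≠ v}) : V) ∈ (T : Set V) := by
          intro x hx
          simp only [hT, Finset.coe_union, Set.mem_union, Finset.coe_image, Set.mem_image,
            Finset.mem_coe, Finset.mem_erase]
          exact Or.inl ⟨↑x, ⟨hx, x.2⟩, rfl⟩
        have hgdef : ∀ x : ((S : Set {x : V // x ≠ v})), ∃ y : ((T : Set V)),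
            (if hx : (x : {x : V // x ≠ v}) = u' then (v : V) else ((x : {x : V // x ≠ v}) : V)) = ↑y := by
          intro x
          by_cases hx : (x : {x : V // x ≠ v}) = u'
          · exact ⟨⟨v, hvT⟩, by rw [dif_pos hx]⟩
          · exact ⟨⟨_, hmemT x hx⟩, by rw [dif_neg hx]⟩
        have hbij : Function.Bijective
            (fun x : ((S : Set {x : V // x ≠ v})) =>
              (⟨if (x : {x : V // x ≠ v}) = u' then (v : V) else ((x : {x : V // x ≠ v}) : V),
                by split_ifs with hx; exacts [hvT, hmemT x hx]⟩ : ((T : Set V)))) := by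
          constructor
          · intro x y hxy
            simp only [Subtype.mk.injEq] at hxy
            split_ifs at hxy with hx hy hy
            · exact Subtype.ext (hx.trans hy.symm)
            · exact absurd hxy.symm (y : {x : V // x ≠ v}).2
            · exact absurd hxy (x : {x : V // x ≠ v}).2
            · exact Subtype.ext (Subtype.ext hxy)
          · rintro ⟨y, hy⟩
            have hy' := hy
            simp only [hT, Finset.coe_union, Set.mem_union, Finset.coe_image, Set.mem_image,
              Finset.mem_coe, Finset.mem_erase, Finset.coe_singleton,
              Set.mem_singleton_iff] at hy'
            rcases hy' with ⟨a, ⟨hau', haS⟩, rfl⟩ | rfl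
            · refine ⟨⟨a, haS⟩, ?_⟩
              simp only [if_neg hau']
            · refine ⟨⟨u', hu'S⟩, Subtype.ext ?_⟩
              simp
        set e := Equiv.ofBijective _ hbij with he
        have hiff : ∀ (a b : ((S : Set {x : V // x ≠ v}))),
            ((contractEdge G u v).induce (S : Set {x : V // x ≠ v})).Adj a b ↔
              (G.induce (T : Set V)).Adj (e a) (e b) := by
          rintro ⟨a, ha⟩ ⟨b, hb⟩
          show (contractEdge G u v).Adj a b ↔
            G.Adj (if a = u' then v else (a : V)) (if b = u' then v else (b : V))
          by_cases hau : a = u'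
          · subst hau
            rw [if_pos rfl]
            by_cases hbu : b = u'
            · subst hbu
              rw [if_pos rfl]
              simp [SimpleGraph.irrefl]
            · rw [if_neg hbu]
              have hbu' : (b : V) ≠ u := fun hc => hbu (Subtype.ext hc)
              rw [cB G u v hune b hbu']
              constructor
              · rintro (h1 | h1)
                · exact hcaseB b hb hbu h1
                · exact h1
              · exact fun h1 => Or.inr h1
          · rw [if_neg hau]
            by_cases hbu : b = u'
            · subst hbu
              rw [if_pos rfl]
              have hau' : (a : V) ≠ u := fun hc => hau (Subtype.ext hc)
              rw [SimpleGraph.adj_comm, G.adj_comm, cB G u v hune a hau']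
              constructor
              · rintro (h1 | h1)
                · exact hcaseB a ha hau h1
                · exact h1
              · exact fun h1 => Or.inr h1
            · rw [if_neg hbu]
              exact cA G u v a b (fun hc => hau (Subtype.ext hc)) (fun hc => hbu (Subtype.ext hc))
        exact hG T ⟨twoConnected_congr e hiff hS.1,
          twoConnected_congr e (compl_adj_congr e hiff) hS.2⟩
      · -- the contraction case
        push_neg at hcaseB
        obtain ⟨c₀, hc₀S, hc₀u, hc₀v, hc₀n⟩ := hcaseB
        set T : Finset V := S.image Subtype.val ∪ {v} with hT
        have hvT : v ∈ (T : Set V) := by simp [hT]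
        have hmemT : ∀ x : {x : V // x ≠ v}, x ∈ S → (x : V) ∈ (T : Set V) := by
          intro x hx
          simp only [hT, Finset.coe_union, Set.mem_union, Finset.coe_image, Set.mem_image,
            Finset.mem_coe]
          exact Or.inl ⟨x, hx, rfl⟩
        have huT : u ∈ (T : Set V) := hmemT u' hu'S
        have huvK : (G.induce (T : Set V)).Adj ⟨u, huT⟩ ⟨v, hvT⟩ := h
        have hbij : Function.Bijective
            (fun x : ((S : Set {x : V // x ≠ v})) =>
              (⟨⟨((x : {x : V // x ≠ v}) : V), hmemT _ x.2⟩,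
                fun hc => (x : {x : V // x ≠ v}).2 (congrArg Subtype.val hc)⟩ :
                {y : ((T : Set V)) // y ≠ ⟨v, hvT⟩})) := by
          constructor
          · intro x y hxy
            simp only [Subtype.mk.injEq] at hxy
            exact Subtype.ext (Subtype.ext hxy)
          · rintro ⟨⟨y, hyT⟩, hyv⟩
            have hyv' : y ≠ v := fun hc => hyv (Subtype.ext hc)
            have hyT' := hyT
            simp only [hT, Finset.coe_union, Set.mem_union, Finset.coe_image, Set.mem_image,
              Finset.mem_coe, Finset.coe_singleton, Set.mem_singleton_iff] at hyT'
            rcases hyT' with ⟨a, haS, rfl⟩ | rfl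
            · exact ⟨⟨a, haS⟩, rfl⟩
            · exact absurd rfl hyv'
        have hiff : ∀ (a b : ((S : Set {x : V // x ≠ v}))),
            ((contractEdge G u v).induce (S : Set {x : V // x ≠ v})).Adj a b ↔
              (contractEdge (G.induce (T : Set V)) ⟨u, huT⟩ ⟨v, hvT⟩).Adj
                ((Equiv.ofBijective _ hbij) a) ((Equiv.ofBijective _ hbij) b) := by
          rintro ⟨a, ha⟩ ⟨b, hb⟩
          show (contractEdge G u v).Adj a b ↔ _
          rw [contractEdge, contractEdge, SimpleGraph.fromRel_adj, SimpleGraph.fromRel_adj]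
          simp only [Equiv.ofBijective_apply, SimpleGraph.comap_adj,
            Function.Embedding.coe_subtype, ne_eq, Subtype.mk.injEq, Subtype.ext_iff]
        have h2c1 : TwoConnected (contractEdge (G.induce (T : Set V)) ⟨u, huT⟩ ⟨v, hvT⟩) :=
          twoConnected_congr (Equiv.ofBijective _ hbij) hiff hS.1
        have h2c2 : TwoConnected (contractEdge (G.induce (T : Set V)) ⟨u, huT⟩ ⟨v, hvT⟩)ᶜ :=
          twoConnected_congr (Equiv.ofBijective _ hbij)
            (compl_adj_congr (Equiv.ofBijective _ hbij) hiff) hS.2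
        refine hG T (lemB (G.induce (T : Set V)) ⟨u, huT⟩ ⟨v, hvT⟩ huvK
          ⟨↑b₀, hmemT _ hb₀S⟩ ?_ ?_ ?_ ⟨↑c₀, hmemT _ hc₀S⟩ ?_ ?_ ?_ h2c1 h2c2)
        · intro hc
          have : (b₀ : V) = u := congrArg Subtype.val hc
          exact hb₀u (Subtype.ext this)
        · exact hb₀v
        · exact hb₀n
        · intro hc
          have : (c₀ : V) = v := congrArg Subtype.val hc
          exact c₀.2 this
        · exact hc₀v
        · exact hc₀n
  · refine key ?_
    rintro ⟨a, ha⟩ ⟨b, hb⟩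
    have hau : (a : V) ≠ u := fun hc => hu'S (by rwa [show a = u' from Subtype.ext hc] at ha)
    have hbu : (b : V) ≠ u := fun hc => hu'S (by rwa [show b = u' from Subtype.ext hc] at hb)
    exact cA G u v a b hau hbu
end

section
/- If G is a 2-connected simple graph, then the complement of G is 2-connected if and only if G has no complete bipartite subgraph using at least |V(G)| - 1 vertices. -/
/-- Vertices reachable inside a "closed" set stay in it. -/
lemma walk_stay {W : Type} {H : SimpleGraph W} {A : Set W}
    (hclosed : ∀ a ∈ A, ∀ b, H.Adj a b → b ∈ A) :
    ∀ {a b : W}, H.Walk a b → a ∈ A → b ∈ A := by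
  intro a b p
  induction p with
  | nil => exact id
  | cons h _ ih => exact fun ha => ih (hclosed _ ha _ h)

/-- A disconnected nonempty finite graph splits into two nonempty parts with no edges between. -/
lemma exists_partition {W : Type} [Fintype W] (H : SimpleGraph W) (hne : Nonempty W)
    (h : ¬ H.Connected) :
    ∃ A B : Finset W, A.Nonempty ∧ B.Nonempty ∧ Disjoint A B ∧
      A.card + B.card = Fintype.card W ∧ ∀ a ∈ A, ∀ b ∈ B, ¬ H.Adj a b := by
  classical
  rw [SimpleGraph.connected_iff] at h
  push_neg at h
  have h2 : ¬ H.Preconnected := fun hp => (h hp).false hne.some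
  unfold SimpleGraph.Preconnected at h2
  push_neg at h2
  obtain ⟨u, w, huw⟩ := h2
  refine ⟨Finset.univ.filter (fun x => H.Reachable u x),
          Finset.univ.filter (fun x => ¬ H.Reachable u x),
          ⟨u, by simp [SimpleGraph.Reachable.refl]⟩, ⟨w, by simpa using huw⟩, ?_, ?_, ?_⟩
  · rw [Finset.disjoint_left]
    intro a ha hb
    simp only [Finset.mem_filter] at ha hb
    exact hb.2 ha.2
  · exact Finset.card_filter_add_card_filter_not _
  · intro a ha b hb hadj
    simp only [Finset.mem_filter] at ha hb
    exact hb.2 (ha.2.trans hadj.reachable)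

theorem complement_twoConnected_iff {V : Type} [Fintype V] (G : SimpleGraph V)
    (hG : TwoConnected G) :
    TwoConnected Gᶜ ↔
      ¬ ∃ A B : Finset V, A.Nonempty ∧ B.Nonempty ∧ Disjoint A B ∧
        Fintype.card V - 1 ≤ A.card + B.card ∧
        ∀ a ∈ A, ∀ b ∈ B, G.Adj a b := by
  classical
  have hcard3 : 3 ≤ Fintype.card V := hG.1
  have hcardc : ∀ v : V, Fintype.card ({v}ᶜ : Set V) = Fintype.card V - 1 := by
    intro v
    rw [Fintype.card_compl_set]
    simp
  constructor
  · rintro hGc ⟨A, B, ⟨a0, ha0⟩, ⟨b0, hb0⟩, hd, hcard, hadj⟩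
    by_cases hu : A ∪ B = Finset.univ
    · -- complement is disconnected : contradiction with connectedness
      have hclosed : ∀ a ∈ (↑A : Set V), ∀ b, Gᶜ.Adj a b → b ∈ (↑A : Set V) := by
        intro a ha b hadj'
        have hb : b ∈ A ∪ B := hu ▸ Finset.mem_univ b
        rcases Finset.mem_union.mp hb with h | h
        · exact h
        · exact absurd (hadj a ha b h) hadj'.2
      obtain ⟨p⟩ := hGc.2.1.preconnected a0 b0
      have := walk_stay hclosed p ha0
      exact (Finset.disjoint_left.mp hd this) hb0
    · -- a vertex v outside A ∪ B ; then Gᶜ - v is disconnected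
      have : ∃ v : V, v ∉ A ∪ B := by
        by_contra hall
        push_neg at hall
        exact hu (Finset.eq_univ_iff_forall.mpr hall)
      obtain ⟨v, hv⟩ := this
      -- every vertex other than v lies in A ∪ B
      have hall : ∀ x : V, x ≠ v → x ∈ A ∪ B := by
        intro x hx
        by_contra hxn
        have hsub : A ∪ B ⊆ ({v, x} : Finset V)ᶜ := by
          intro y hy
          rw [Finset.mem_compl, Finset.mem_insert, Finset.mem_singleton]
          rintro (rfl | rfl) <;> [exact hv hy; exact hxn hy]
        have h1 : (A ∪ B).card ≤ Fintype.card V - 2 := by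
          have := Finset.card_le_card hsub
          rwa [Finset.card_compl, Finset.card_insert_of_notMem (by simpa using Ne.symm hx),
            Finset.card_singleton] at this
        have h2 : Fintype.card V - 1 ≤ (A ∪ B).card := by
          rw [Finset.card_union_of_disjoint hd]; exact hcard
        omega
      -- work in the induced graph on {v}ᶜ
      have ha0v : a0 ∈ ({v}ᶜ : Set V) := by simp; rintro rfl; exact hv (Finset.mem_union_left _ ha0)
      have hb0v : b0 ∈ ({v}ᶜ : Set V) := by simp; rintro rfl; exact hv (Finset.mem_union_right _ hb0)
      have hclosed : ∀ a ∈ {x : ({v}ᶜ : Set V) | x.1 ∈ A}, ∀ b,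
          (Gᶜ.induce ({v}ᶜ : Set V)).Adj a b → b ∈ {x : ({v}ᶜ : Set V) | x.1 ∈ A} := by
        intro a ha b hadj'
        have hGadj : Gᶜ.Adj a.1 b.1 := hadj'
        have hb : b.1 ∈ A ∪ B := hall b.1 (by exact b.2)
        rcases Finset.mem_union.mp hb with h | h
        · exact h
        · exact absurd (hadj a.1 ha b.1 h) hGadj.2
      obtain ⟨p⟩ := (hGc.2.2 v).preconnected ⟨a0, ha0v⟩ ⟨b0, hb0v⟩
      have := walk_stay hclosed p ha0
      exact (Finset.disjoint_left.mp hd this) hb0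
  · intro h
    refine ⟨hcard3, ?_, ?_⟩
    · by_contra hc
      have hne : Nonempty V := Fintype.card_pos_iff.mp (by omega)
      obtain ⟨A, B, hA, hB, hd, hcard, hnadj⟩ := exists_partition Gᶜ hne hc
      refine h ⟨A, B, hA, hB, hd, by omega, ?_⟩
      intro a ha b hb
      have hne' : a ≠ b := fun heq => (Finset.disjoint_left.mp hd ha) (heq ▸ hb)
      by_contra hg
      exact hnadj a ha b hb ⟨hne', hg⟩
    · intro v
      by_contra hc
      have hne : Nonempty ({v}ᶜ : Set V) := by
        rw [← Fintype.card_pos_iff, hcardc v]; omega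
      obtain ⟨A', B', hA', hB', hd', hcard', hnadj⟩ :=
        exists_partition (Gᶜ.induce ({v}ᶜ : Set V)) hne hc
      refine h ⟨A'.image Subtype.val, B'.image Subtype.val, hA'.image _, hB'.image _, ?_, ?_, ?_⟩
      · exact Finset.disjoint_image (Subtype.val_injective) |>.mpr hd'
      · rw [Finset.card_image_of_injective _ Subtype.val_injective,
          Finset.card_image_of_injective _ Subtype.val_injective, hcard', hcardc v]
      · rintro a ha b hb
        obtain ⟨a', ha', rfl⟩ := Finset.mem_image.mp ha
        obtain ⟨b', hb', rfl⟩ := Finset.mem_image.mp hb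
        have hne' : a' ≠ b' := fun heq => (Finset.disjoint_left.mp hd' ha') (heq ▸ hb')
        by_contra hg
        exact hnadj a' ha' b' hb' ⟨fun heq => hne' (Subtype.val_injective heq), hg⟩
end

section
/- Let G be the complement of a cycle C of length at least 5. Then for every edge e of G, the simple contraction G/e is a 2-cograph; hence G is an induced-minor-minimal non-2-cograph. -/
/-- `H` is an induced minor of `G`: witnessed by pairwise disjoint nonempty
connected branch sets, with adjacency in `H` iff there is an edge between
the corresponding branch sets. -/
def IsInducedMinor {V W : Type} (G : SimpleGraph V) (H : SimpleGraph W) : Prop :=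
  ∃ B : W → Set V,
    (∀ w, (B w).Nonempty) ∧
    (∀ w, (G.induce (B w)).Connected) ∧
    (Pairwise fun w w' => Disjoint (B w) (B w')) ∧
    ∀ w w', w ≠ w' → (H.Adj w w' ↔ ∃ a ∈ B w, ∃ b ∈ B w', G.Adj a b)

/-- `G` is an induced-minor-minimal non-2-cograph: `G` is not a 2-cograph but
every proper induced minor of `G` (one with fewer vertices) is a 2-cograph. -/
def IsIMMNon2Cograph {V : Type} [Fintype V] (G : SimpleGraph V) : Prop :=
  ¬ IsTwoCograph G ∧
    ∀ (W : Type) [Fintype W], ∀ H : SimpleGraph W,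
      IsInducedMinor G H → Fintype.card W < Fintype.card V → IsTwoCograph H

open SimpleGraph
open Fin.NatCast Fin.CommRing

namespace CC
variable {m : ℕ}

lemma val_succ (a : Fin (m+5)) :
    (a+1).val = a.val + 1 ∨ (a.val = m+4 ∧ (a+1).val = 0) := by
  rcases eq_or_ne a (Fin.last (m+4)) with h | h
  · right; subst h; constructor
    · rfl
    · rw [Fin.val_add_one, if_pos rfl]
  · left; rw [Fin.val_add_one, if_neg h]

lemma add_one_ne (a : Fin (m+5)) : a + 1 ≠ a := by
  intro h
  have h1 := val_succ a
  have hv := congrArg Fin.val h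
  have := a.isLt
  rcases h1 with h1 | ⟨h1, h1'⟩ <;> omega

lemma add_two_ne (a : Fin (m+5)) : a + 1 + 1 ≠ a := by
  intro h
  have h1 := val_succ a
  have h2 := val_succ (a+1)
  have hv := congrArg Fin.val h
  have := a.isLt
  have := (a+1).isLt
  rcases h1 with h1 | ⟨h1, h1'⟩ <;> rcases h2 with h2 | ⟨h2, h2'⟩ <;> omega

lemma add_three_ne (a : Fin (m+5)) : a + 1 + 1 + 1 ≠ a := by
  intro h
  have h1 := val_succ a
  have h2 := val_succ (a+1)
  have h3 := val_succ (a+1+1)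
  have hv := congrArg Fin.val h
  have := a.isLt
  have := (a+1).isLt
  have := (a+1+1).isLt
  rcases h1 with h1 | ⟨h1, h1'⟩ <;> rcases h2 with h2 | ⟨h2, h2'⟩ <;>
    rcases h3 with h3 | ⟨h3, h3'⟩ <;> omega

lemma add_four_ne (a : Fin (m+5)) : a + 1 + 1 + 1 + 1 ≠ a := by
  intro h
  have h1 := val_succ a
  have h2 := val_succ (a+1)
  have h3 := val_succ (a+1+1)
  have h4 := val_succ (a+1+1+1)
  have hv := congrArg Fin.val h
  have := a.isLt
  have := (a+1).isLt
  have := (a+1+1).isLt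
  have := (a+1+1+1).isLt
  rcases h1 with h1 | ⟨h1, h1'⟩ <;> rcases h2 with h2 | ⟨h2, h2'⟩ <;>
    rcases h3 with h3 | ⟨h3, h3'⟩ <;> rcases h4 with h4 | ⟨h4, h4'⟩ <;> omega

lemma cyc_adj {a b : Fin (m+5)} :
    (cycleGraph (m+5)).Adj a b ↔ b = a + 1 ∨ a = b + 1 := by
  have h : (cycleGraph (m+5)).Adj a b ↔ a - b = 1 ∨ b - a = 1 :=
    SimpleGraph.cycleGraph_adj (n := m+3)
  rw [h]
  constructor
  · rintro (h | h)
    · right; rw [sub_eq_iff_eq_add] at h; rw [h]; exact add_comm 1 _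
    · left; rw [sub_eq_iff_eq_add] at h; rw [h]; exact add_comm 1 _
  · rintro (h | h)
    · right; rw [h]; exact add_sub_cancel_left a 1
    · left; rw [h]; exact add_sub_cancel_left b 1

lemma adj_succ (a : Fin (m+5)) : (cycleGraph (m+5)).Adj a (a+1) :=
  cyc_adj.mpr (Or.inl rfl)

lemma not_adj_two (a : Fin (m+5)) : ¬ (cycleGraph (m+5)).Adj a (a+1+1) := by
  rw [cyc_adj]
  rintro (h | h)
  · exact add_one_ne (a+1) h
  · exact add_three_ne a h.symm

lemma not_adj_three (a : Fin (m+5)) : ¬ (cycleGraph (m+5)).Adj a (a+1+1+1) := by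
  rw [cyc_adj]
  rintro (h | h)
  · exact add_two_ne (a+1) h
  · exact add_four_ne a h.symm


lemma shift_ne (v : Fin (m+5)) {k : ℕ} (h0 : 0 < k) (hk : k < m+5) :
    v + (k : Fin (m+5)) ≠ v := by
  intro h
  have h1 : v + (k : Fin (m+5)) = v + 0 := by rw [add_zero]; exact h
  have h2 := add_left_cancel h1
  have h3 := congrArg Fin.val h2
  rw [Fin.val_cast_of_lt hk] at h3
  simp at h3
  omega

lemma cycle_conn (s : Set (Fin (m+5))) (v : Fin (m+5)) (hv : ∀ x, x ≠ v → x ∈ s) :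
    ((cycleGraph (m+5)).induce s).Connected := by
  have hv1 : v + 1 ∈ s := hv _ (add_one_ne v)
  have key : ∀ (k : ℕ), 1 ≤ k → k ≤ m+4 → ∀ (hk : v + (k : Fin (m+5)) ∈ s),
      ((cycleGraph (m+5)).induce s).Reachable ⟨v+1, hv1⟩ ⟨v + (k : Fin (m+5)), hk⟩ := by
    intro k
    induction k with
    | zero => omega
    | succ k ih =>
      intro _ hk hmem
      rcases Nat.eq_zero_or_pos k with h | h
      · subst h
        have he : (⟨v + ((0+1 : ℕ) : Fin (m+5)), hmem⟩ : ↥s) = ⟨v+1, hv1⟩ := by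
          apply Subtype.ext
          norm_num
        rw [he]
      · have hkmem : v + (k : Fin (m+5)) ∈ s := hv _ (shift_ne v h (by omega))
        have hreach := ih h (by omega) hkmem
        have hcast : ((k+1 : ℕ) : Fin (m+5)) = (k : Fin (m+5)) + 1 := by push_cast; ring
        have hedge : ((cycleGraph (m+5)).induce s).Adj ⟨v + (k : Fin (m+5)), hkmem⟩
            ⟨v + ((k+1 : ℕ) : Fin (m+5)), hmem⟩ := by
          show (cycleGraph (m+5)).Adj (v + (k : Fin (m+5))) (v + ((k+1 : ℕ) : Fin (m+5)))
          rw [hcast, ← add_assoc]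
          exact adj_succ _
        exact hreach.trans hedge.reachable
  have main : ∀ (x : Fin (m+5)) (hx : x ∈ s),
      ((cycleGraph (m+5)).induce s).Reachable ⟨x, hx⟩ ⟨v+1, hv1⟩ := by
    intro x hx
    by_cases hxv : x = v
    · subst hxv
      have hedge : ((cycleGraph (m+5)).induce s).Adj ⟨x, hx⟩ ⟨x+1, hv1⟩ := by
        show (cycleGraph (m+5)).Adj x (x+1)
        exact adj_succ x
      exact hedge.reachable
    · set k := (x - v).val with hkdef
      have hxe : v + ((k : ℕ) : Fin (m+5)) = x := by
        rw [hkdef, Fin.cast_val_eq_self]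
        exact (add_comm v (x - v)).trans (sub_add_cancel x v)
      have hk0 : 0 < k := by
        rcases Nat.eq_zero_or_pos k with h | h
        · exfalso
          apply hxv
          rw [← sub_eq_zero]
          rw [← Fin.cast_val_eq_self (x - v), ← hkdef, h]
          norm_num
        · exact h
      have hkm : k ≤ m + 4 := by have := (x - v).isLt; omega
      have hx' : v + ((k : ℕ) : Fin (m+5)) ∈ s := by rw [hxe]; exact hx
      have := (key k hk0 hkm hx').symm
      have he : (⟨v + ((k : ℕ) : Fin (m+5)), hx'⟩ : ↥s) = ⟨x, hx⟩ := Subtype.ext hxe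
      rwa [he] at this
  haveI : Nonempty ↥s := ⟨⟨v+1, hv1⟩⟩
  exact ⟨fun a b => (main a.1 a.2).trans (main b.1 b.2).symm⟩

lemma compl_conn (s : Set (Fin (m+5))) (v : Fin (m+5)) (hv : ∀ x, x ≠ v → x ∈ s) :
    ((cycleGraph (m+5))ᶜ.induce s).Connected := by
  have hv1 : v + 1 ∈ s := hv _ (add_one_ne v)
  haveI : Nonempty ↥s := ⟨⟨v+1, hv1⟩⟩
  have key : ∀ (a : Fin (m+5)) (ha : a ∈ s) (hb : a + 1 ∈ s),
      ((cycleGraph (m+5))ᶜ.induce s).Reachable ⟨a, ha⟩ ⟨a+1, hb⟩ := by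
    intro a ha hb
    by_cases h3 : a+1+1+1 ∈ s
    · have e1 : ((cycleGraph (m+5))ᶜ.induce s).Adj ⟨a, ha⟩ ⟨a+1+1+1, h3⟩ := by
        show (cycleGraph (m+5))ᶜ.Adj a (a+1+1+1)
        exact (compl_adj _ _ _).mpr ⟨fun h => add_three_ne a h.symm, not_adj_three a⟩
      have e2 : ((cycleGraph (m+5))ᶜ.induce s).Adj ⟨a+1+1+1, h3⟩ ⟨a+1, hb⟩ := by
        show (cycleGraph (m+5))ᶜ.Adj (a+1+1+1) (a+1)
        exact (compl_adj _ _ _).mpr ⟨add_two_ne (a+1), fun h => not_adj_two (a+1) h.symm⟩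
      exact e1.reachable.trans e2.reachable
    · have hveq : a+1+1+1 = v := by by_contra h; exact h3 (hv _ h)
      have h2 : a+1+1 ∈ s := hv _ (by
        rw [← hveq]; exact fun h => add_one_ne (a+1+1) h.symm)
      have h4 : a+1+1+1+1 ∈ s := hv _ (by rw [← hveq]; exact add_one_ne (a+1+1+1))
      have e1 : ((cycleGraph (m+5))ᶜ.induce s).Adj ⟨a, ha⟩ ⟨a+1+1, h2⟩ := by
        show (cycleGraph (m+5))ᶜ.Adj a (a+1+1)
        exact (compl_adj _ _ _).mpr ⟨fun h => add_two_ne a h.symm, not_adj_two a⟩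
      have e2 : ((cycleGraph (m+5))ᶜ.induce s).Adj ⟨a+1+1, h2⟩ ⟨a+1+1+1+1, h4⟩ := by
        show (cycleGraph (m+5))ᶜ.Adj (a+1+1) (a+1+1+1+1)
        exact (compl_adj _ _ _).mpr ⟨fun h => add_two_ne (a+1+1) h.symm, not_adj_two (a+1+1)⟩
      have e3 : ((cycleGraph (m+5))ᶜ.induce s).Adj ⟨a+1+1+1+1, h4⟩ ⟨a+1, hb⟩ := by
        show (cycleGraph (m+5))ᶜ.Adj (a+1+1+1+1) (a+1)
        exact (compl_adj _ _ _).mpr ⟨add_three_ne (a+1), fun h => not_adj_three (a+1) h.symm⟩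
      exact e1.reachable.trans (e2.reachable.trans e3.reachable)
  constructor
  rintro ⟨a, ha⟩ ⟨b, hb⟩
  by_cases hab : a = b
  · subst hab; rfl
  by_cases hadj : (cycleGraph (m+5)).Adj a b
  · rcases cyc_adj.mp hadj with h | h
    · subst h; exact key a ha hb
    · subst h; exact (key b hb ha).symm
  · have e : ((cycleGraph (m+5))ᶜ.induce s).Adj ⟨a, ha⟩ ⟨b, hb⟩ := by
      show (cycleGraph (m+5))ᶜ.Adj a b
      exact (compl_adj _ _ _).mpr ⟨hab, hadj⟩
    exact e.reachable

lemma exists_adj_of_reachable_ne {V : Type} {G : SimpleGraph V} {a b : V}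
    (h : G.Reachable a b) (hne : a ≠ b) : ∃ c, G.Adj a c := by
  obtain ⟨p⟩ := h
  cases p with
  | nil => exact absurd rfl hne
  | cons h _ => exact ⟨_, h⟩

lemma two_nbrs {W : Type} [Fintype W] {K : SimpleGraph W} (h : TwoConnected K) (v : W) :
    ∃ u1 u2, u1 ≠ u2 ∧ K.Adj v u1 ∧ K.Adj v u2 := by
  classical
  obtain ⟨hcard, hconn, hdel⟩ := h
  by_contra hc
  have hc' : ∀ u1 u2, K.Adj v u1 → K.Adj v u2 → u1 = u2 := by
    intro u1 u2 h1 h2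
    by_contra hne
    exact hc ⟨u1, u2, hne, h1, h2⟩
  by_cases hex : ∃ u, K.Adj v u
  · obtain ⟨u, hu⟩ := hex
    have hvu : v ≠ u := hu.ne
    have hw : ∃ w, w ≠ v ∧ w ≠ u := by
      by_contra hno
      push_neg at hno
      have hsub : (Finset.univ : Finset W) ⊆ {v, u} := by
        intro w _
        rcases eq_or_ne w v with h | h
        · simp [h]
        · simp [hno w h]
      have hle := Finset.card_le_card hsub
      have h2 : ({v, u} : Finset W).card ≤ 2 := Finset.card_insert_le _ _ |>.trans (by simp)
      have : Fintype.card W ≤ 2 := by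
        rw [← Finset.card_univ]; omega
      omega
    obtain ⟨w, hwv, hwu⟩ := hw
    have hreach := (hdel u).preconnected ⟨v, hvu⟩ ⟨w, hwu⟩
    have hne : (⟨v, hvu⟩ : ↥({u}ᶜ : Set W)) ≠ ⟨w, hwu⟩ := by
      intro h; exact hwv (congrArg Subtype.val h).symm
    obtain ⟨c, hc2⟩ := exists_adj_of_reachable_ne hreach hne
    have hKadj : K.Adj v c.val := hc2
    have : c.val = u := (hc' u c.val hu hKadj).symm
    exact c.2 this
  · push_neg at hex
    have h1 : 1 < Fintype.card W := by omega
    obtain ⟨w, hwv⟩ := Fintype.exists_ne_of_one_lt_card h1 v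
    obtain ⟨c, hc2⟩ := exists_adj_of_reachable_ne (hconn.preconnected v w) (Ne.symm hwv)
    exact hex c hc2

lemma nbr_pair {b x y : Fin (m+5)} (hxy : x ≠ y)
    (h1 : (cycleGraph (m+5)).Adj b x) (h2 : (cycleGraph (m+5)).Adj b y) :
    (x = b + 1 ∧ b = y + 1) ∨ (y = b + 1 ∧ b = x + 1) := by
  rcases cyc_adj.mp h1 with hx | hx <;> rcases cyc_adj.mp h2 with hy | hy
  · exact absurd (hx.trans hy.symm) hxy
  · exact Or.inl ⟨hx, hy⟩
  · exact Or.inr ⟨hy, hx⟩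
  · exact absurd (add_right_cancel (hx.symm.trans hy) : x = y) hxy

lemma common_nbrs {b1 b2 a a' : Fin (m+5)} (hb : b1 ≠ b2) (haa : a ≠ a')
    (h11 : (cycleGraph (m+5)).Adj b1 a) (h12 : (cycleGraph (m+5)).Adj b1 a')
    (h21 : (cycleGraph (m+5)).Adj b2 a) (h22 : (cycleGraph (m+5)).Adj b2 a') : False := by
  rcases nbr_pair haa h11 h12 with ⟨p1, q1⟩ | ⟨p1, q1⟩ <;>
    rcases nbr_pair haa h21 h22 with ⟨p2, q2⟩ | ⟨p2, q2⟩
  · exact hb (q1.trans q2.symm)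
  · have h := q1
    rw [p2] at h
    rw [q2] at h
    rw [p1] at h
    exact add_four_ne b1 h.symm
  · have h := q1
    rw [p2] at h
    rw [q2] at h
    rw [p1] at h
    exact add_four_ne b1 h.symm
  · exact hb (q1.trans q2.symm)

lemma core {W : Type} [Fintype W] (hW : Fintype.card W < m+5)
    (B : W → Set (Fin (m+5))) (hBne : ∀ w, (B w).Nonempty)
    (hdisj : Pairwise fun w w' => Disjoint (B w) (B w'))
    (K : SimpleGraph W)
    (hK : ∀ w w', K.Adj w w' → ∀ a ∈ B w, ∀ b ∈ B w', (cycleGraph (m+5)).Adj a b) :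
    ¬ TwoConnected K := by
  intro h
  have hcard := h.1
  have hdeg := fun v => two_nbrs h v
  choose f hf using hBne
  have hsing : ∀ v, ∀ a ∈ B v, a = f v := by
    intro v a ha
    by_contra hne'
    obtain ⟨u1, u2, hu12, h1, h2⟩ := hdeg v
    have hb12 : f u1 ≠ f u2 := fun he =>
      Set.disjoint_left.mp (hdisj hu12) (hf u1) (he ▸ hf u2)
    exact common_nbrs hb12 hne'
      (hK v u1 h1 a ha _ (hf u1)).symm (hK v u1 h1 _ (hf v) _ (hf u1)).symm
      (hK v u2 h2 a ha _ (hf u2)).symm (hK v u2 h2 _ (hf v) _ (hf u2)).symm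
  have hinj : Function.Injective f := by
    intro w w' he
    by_contra hww
    exact Set.disjoint_left.mp (hdisj hww) (hf w) (he ▸ hf w')
  have hsucc : ∀ v : W, ∃ u, f u = f v + 1 := by
    intro v
    obtain ⟨u1, u2, hu12, h1, h2⟩ := hdeg v
    have c1 := hK v u1 h1 _ (hf v) _ (hf u1)
    have c2 := hK v u2 h2 _ (hf v) _ (hf u2)
    rcases cyc_adj.mp c1 with h' | h'
    · exact ⟨u1, h'⟩
    rcases cyc_adj.mp c2 with h'' | h''
    · exact ⟨u2, h''⟩
    · exact absurd (hinj (add_right_cancel (h'.symm.trans h''))) hu12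
  haveI : Nonempty W := Fintype.card_pos_iff.mp (by omega)
  obtain ⟨v0⟩ := ‹Nonempty W›
  have hrange : ∀ k : ℕ, ∃ u, f u = f v0 + (k : Fin (m+5)) := by
    intro k
    induction k with
    | zero => exact ⟨v0, by norm_num⟩
    | succ k ih =>
      obtain ⟨u, hu⟩ := ih
      obtain ⟨u', hu'⟩ := hsucc u
      refine ⟨u', ?_⟩
      rw [hu', hu]
      push_cast
      ring
  have hsurj : Function.Surjective f := by
    intro x
    obtain ⟨u, hu⟩ := hrange ((x - f v0).val)
    refine ⟨u, ?_⟩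
    rw [hu, Fin.cast_val_eq_self]
    exact (add_comm _ _).trans (sub_add_cancel x (f v0))
  have hle := Fintype.card_le_of_surjective f hsurj
  rw [Fintype.card_fin] at hle
  omega

lemma conn_induce_induce {V : Type} (G : SimpleGraph V) (s : Set V) (t : Set ↥s)
    (h : (G.induce (Subtype.val '' t)).Connected) : ((G.induce s).induce t).Connected := by
  have e : ((G.induce s).induce t) ≃g (G.induce (Subtype.val '' t)) :=
    ⟨Equiv.Set.image Subtype.val t Subtype.val_injective, Iff.rfl⟩
  exact e.connected_iff.mpr h

lemma app {W : Type} [Fintype W] (hW : Fintype.card W < m+5) (H : SimpleGraph W)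
    (B : W → Set (Fin (m+5))) (hBne : ∀ w, (B w).Nonempty)
    (hdisj : Pairwise fun w w' => Disjoint (B w) (B w'))
    (hadj : ∀ w w', w ≠ w' →
      (∃ a ∈ B w, ∃ b ∈ B w', ((cycleGraph (m+5))ᶜ).Adj a b) → H.Adj w w') :
    IsTwoCograph H := by
  intro S hS
  obtain ⟨h1, h2⟩ := hS
  refine core ?_ (fun w => B w.val) (fun w => hBne w.val) ?_ ((H.induce (S : Set W))ᶜ) ?_ h2
  · calc Fintype.card ↥(S : Set W) ≤ Fintype.card W :=
        Fintype.card_le_of_injective Subtype.val Subtype.val_injective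
      _ < m+5 := hW
  · intro w w' hww
    exact hdisj fun h => hww (Subtype.ext h)
  · intro w w' hKadj a ha b hb
    obtain ⟨hne', hnadj⟩ := (compl_adj _ _ _).mp hKadj
    have hvals : w.val ≠ w'.val := fun h => hne' (Subtype.ext h)
    have hab : a ≠ b := fun h =>
      Set.disjoint_left.mp (hdisj hvals) ha (h ▸ hb)
    by_contra hcyc
    apply hnadj
    show H.Adj w.val w'.val
    exact hadj _ _ hvals ⟨a, ha, b, hb, (compl_adj _ _ _).mpr ⟨hab, hcyc⟩⟩

lemma not_two_cograph : ¬ IsTwoCograph ((cycleGraph (m+5))ᶜ) := by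
  intro h
  apply h Finset.univ
  set s₀ : Set (Fin (m+5)) := (↑(Finset.univ : Finset (Fin (m+5))) : Set (Fin (m+5))) with hs₀
  have hmem : ∀ x : Fin (m+5), x ∈ s₀ := fun x => Finset.mem_univ x
  have himg : ∀ v : ↥s₀, ∀ x : Fin (m+5), x ≠ v.val →
      x ∈ Subtype.val '' ({v}ᶜ : Set ↥s₀) := by
    intro v x hx
    exact ⟨⟨x, hmem x⟩, fun h => hx (congrArg Subtype.val h), rfl⟩
  constructor
  · refine ⟨by
      rw [Fintype.card_congr (Equiv.subtypeUnivEquiv hmem), Fintype.card_fin]; omega,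
      compl_conn s₀ 0 (fun x _ => hmem x), ?_⟩
    intro v
    exact conn_induce_induce _ _ _ (compl_conn _ v.val (himg v))
  · have hgr : (((cycleGraph (m+5))ᶜ).induce s₀)ᶜ = (cycleGraph (m+5)).induce s₀ := by
      ext a b
      constructor
      · intro hadj
        obtain ⟨hne, hn⟩ := (compl_adj _ _ _).mp hadj
        show (cycleGraph (m+5)).Adj a.val b.val
        by_contra hcyc
        exact hn ((compl_adj _ _ _).mpr ⟨fun h => hne (Subtype.ext h), hcyc⟩)
      · intro hadj
        have hadj' : (cycleGraph (m+5)).Adj a.val b.val := hadj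
        exact (compl_adj _ _ _).mpr ⟨fun h => hadj'.ne (congrArg Subtype.val h),
          fun hGc => ((compl_adj _ _ _).mp hGc).2 hadj'⟩
    rw [hgr]
    refine ⟨by
      rw [Fintype.card_congr (Equiv.subtypeUnivEquiv hmem), Fintype.card_fin]; omega,
      cycle_conn s₀ 0 (fun x _ => hmem x), ?_⟩
    intro v
    exact conn_induce_induce _ _ _ (cycle_conn _ v.val (himg v))

lemma contract_part (u v : Fin (m+5)) :
    IsTwoCograph (contractEdge ((cycleGraph (m+5))ᶜ) u v) := by
  classical
  have hcard : Fintype.card {x : Fin (m+5) // x ≠ v} < m + 5 := by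
    have h1 : Fintype.card {x : Fin (m+5) // x ≠ v} < Fintype.card (Fin (m+5)) := by
      apply Fintype.card_subtype_lt (x := v)
      simp
    rwa [Fintype.card_fin] at h1
  refine app hcard _ (fun w => if w.val = u then ({u, v} : Set (Fin (m+5))) else {w.val}) ?_ ?_ ?_
  · intro w
    split_ifs
    · exact ⟨u, by simp⟩
    · exact ⟨w.val, by simp⟩
  · intro w w' hww
    have hvals : w.val ≠ w'.val := fun h => hww (Subtype.ext h)
    split_ifs with hA hB hB
    · exact absurd (hA.trans hB.symm) hvals
    · rw [Set.disjoint_right]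
      intro x hx hmem
      simp only [Set.mem_singleton_iff] at hx
      subst hx
      rcases hmem with h | h
      · exact hB (by simpa using h)
      · exact w'.2 (by simpa using h)
    · rw [Set.disjoint_left]
      intro x hx hmem
      simp only [Set.mem_singleton_iff] at hx
      subst hx
      rcases hmem with h | h
      · exact hA (by simpa using h)
      · exact w.2 (by simpa using h)
    · simp [Set.disjoint_singleton, hvals]
  · rintro w w' hww ⟨a, ha, b, hb, hGadj⟩
    have hvals : w.val ≠ w'.val := fun h => hww (Subtype.ext h)
    show (SimpleGraph.fromRel _).Adj w w'
    rw [SimpleGraph.fromRel_adj]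
    refine ⟨hww, ?_⟩
    by_cases h1 : w.val = u
    · have h2 : ¬ w'.val = u := fun h => hvals (h1.trans h.symm)
      simp only [h1, if_pos rfl, if_neg h2, Set.mem_singleton_iff] at ha hb
      subst hb
      rcases ha with ha | ha
      · subst ha
        exact Or.inl (Or.inl (by rw [h1]; exact hGadj))
      · subst ha
        exact Or.inl (Or.inr (Or.inl ⟨h1, hGadj⟩))
    · by_cases h2 : w'.val = u
      · simp only [h2, if_pos rfl, if_neg h1, Set.mem_singleton_iff] at ha hb
        subst ha
        rcases hb with hb | hb
        · subst hb
          exact Or.inl (Or.inl (by rw [h2]; exact hGadj))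
        · subst hb
          exact Or.inl (Or.inr (Or.inr ⟨h2, hGadj.symm⟩))
      · simp only [if_neg h1, if_neg h2, Set.mem_singleton_iff] at ha hb
        subst ha; subst hb
        exact Or.inl (Or.inl hGadj)

end CC

theorem complement_cycle_inducedMinorMinimal (n : ℕ) (hn : 5 ≤ n) :
    (∀ u v : Fin n, (SimpleGraph.cycleGraph n)ᶜ.Adj u v →
      IsTwoCograph (contractEdge (SimpleGraph.cycleGraph n)ᶜ u v)) ∧
    IsIMMNon2Cograph (SimpleGraph.cycleGraph n)ᶜ := by
  obtain ⟨m, rfl⟩ : ∃ m, n = m + 5 := ⟨n - 5, by omega⟩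
  constructor
  · intro u v _
    exact CC.contract_part u v
  · refine ⟨CC.not_two_cograph, ?_⟩
    intro W _ H hminor hcard
    obtain ⟨B, hBne, _, hdisj, hiff⟩ := hminor
    rw [Fintype.card_fin] at hcard
    exact CC.app hcard H B hBne hdisj (fun w w' hww hex => (hiff w w' hww).mpr hex)
end

section
/- The class of graphs that are not 2-cographs but all of whose proper induced subgraphs are 2-cographs is infinite. -/
/-- The cycle graph on `ZMod n`. -/
def cyc (n : ℕ) : SimpleGraph (ZMod n) where
  Adj x y := x ≠ y ∧ (x - y = 1 ∨ y - x = 1)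
  symm := by
    constructor
    rintro x y ⟨h1, h2⟩
    exact ⟨h1.symm, h2.symm⟩
  loopless := ⟨by intro x h; exact h.1 rfl⟩

section Cyc

variable {n : ℕ}

lemma zmod_eq_add_val_sub [NeZero n] (m z : ZMod n) :
    z = m + (((z - m).val : ℕ) : ZMod n) := by
  rw [ZMod.natCast_val, ZMod.cast_id]
  ring

lemma natCast_ne_zero_of_lt [NeZero n] {k : ℕ} (hk0 : 0 < k) (hkn : k < n) :
    ((k : ℕ) : ZMod n) ≠ 0 := by
  intro h
  rw [ZMod.natCast_eq_zero_iff] at h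
  exact absurd (Nat.le_of_dvd hk0 h) (by omega)

/-- Reaching the base vertex in a graph carried by the cycle. -/
lemma reach_base [NeZero n] {W : Type*} (H : SimpleGraph W) (f : W → ZMod n)
    (hf : Function.Injective f)
    (hadj : ∀ a b, H.Adj a b ↔ (cyc n).Adj (f a) (f b))
    (m : ZMod n) (hm : ∀ z, z ≠ m → ∃ w, f w = z)
    {w1 : W} (hw1 : f w1 = m + 1) :
    ∀ k : ℕ, 1 ≤ k → k < n → ∀ w, f w = m + (k : ZMod n) → H.Reachable w w1 := by
  intro k
  induction k with
  | zero => omega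
  | succ k ih =>
    intro _ hkn w hw
    rcases Nat.eq_zero_or_pos k with hk0 | hk0
    · subst hk0
      have : f w = f w1 := by rw [hw, hw1]; push_cast; ring
      exact (hf this) ▸ SimpleGraph.Reachable.refl w
    · have h1ne : (1 : ZMod n) ≠ 0 := by
        have : ((1 : ℕ) : ZMod n) ≠ 0 := natCast_ne_zero_of_lt (by omega) (by omega)
        simpa using this
      have hmk : m + (k : ZMod n) ≠ m := by
        intro h
        have h2 := sub_eq_zero_of_eq h
        rw [add_sub_cancel_left] at h2
        exact natCast_ne_zero_of_lt hk0 (by omega) h2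
      obtain ⟨w', hw'⟩ := hm _ hmk
      have hadjww' : H.Adj w w' := by
        rw [hadj, hw, hw']
        constructor
        · intro h
          apply h1ne
          have h2 := sub_eq_zero_of_eq h
          push_cast at h2
          linear_combination h2
        · left; push_cast; ring
      exact hadjww'.reachable.trans (ih hk0 (by omega) w' hw')

/-- A graph isomorphic to the cycle restricted to all-but-at-most-one vertex is connected. -/
lemma connected_of_cycle_like (hn : 3 ≤ n) {W : Type*} [Nonempty W]
    (H : SimpleGraph W) (f : W → ZMod n)
    (hf : Function.Injective f)
    (hadj : ∀ a b, H.Adj a b ↔ (cyc n).Adj (f a) (f b))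
    (m : ZMod n) (hm : ∀ z, z ≠ m → ∃ w, f w = z) : H.Connected := by
  haveI : NeZero n := ⟨by omega⟩
  have h1ne : (1 : ZMod n) ≠ 0 := by
    have := natCast_ne_zero_of_lt (n := n) (k := 1) (by omega) (by omega)
    simpa using this
  obtain ⟨w1, hw1⟩ := hm (m + 1) (by
    intro h
    exact h1ne (by have := sub_eq_zero_of_eq h; rwa [add_sub_cancel_left] at this))
  have key : ∀ x : W, H.Reachable x w1 := by
    intro x
    rcases eq_or_ne (f x) m with hx | hx
    · -- x is the base point m, adjacent to w1
      have : H.Adj x w1 := by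
        rw [hadj, hx, hw1]
        refine ⟨?_, Or.inr (by ring)⟩
        intro h
        exact h1ne (by have := sub_eq_zero_of_eq h.symm; rwa [add_sub_cancel_left] at this)
      exact this.reachable
    · set k := (f x - m).val with hk
      have hfx : f x = m + (k : ZMod n) := zmod_eq_add_val_sub m (f x)
      have hkn : k < n := ZMod.val_lt _
      have hk1 : 1 ≤ k := by
        rcases Nat.eq_zero_or_pos k with h0 | h0
        · exfalso
          apply hx
          rw [hfx, h0]; push_cast; ring
        · exact h0
      exact reach_base H f hf hadj m hm hw1 k hk1 hkn x hfx
  constructor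
  intro x y
  exact (key x).trans (key y).symm

/-- A graph isomorphic to the complement of the cycle restricted to
all-but-at-most-one vertex is connected (for `n ≥ 8`). -/
lemma connected_of_cocycle_like (hn : 8 ≤ n) {W : Type*} [Nonempty W]
    (H : SimpleGraph W) (f : W → ZMod n)
    (hadj : ∀ a b, H.Adj a b ↔ (f a ≠ f b ∧ ¬ (cyc n).Adj (f a) (f b)))
    (m : ZMod n) (hm : ∀ z, z ≠ m → ∃ w, f w = z) : H.Connected := by
  haveI : NeZero n := ⟨by omega⟩
  constructor
  intro x y
  rcases eq_or_ne x y with rfl | hxy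
  · exact SimpleGraph.Reachable.refl x
  · set B : Finset (ZMod n) :=
      {f x - 1, f x, f x + 1, f y - 1, f y, f y + 1, m} with hB
    have hcardB : B.card ≤ 7 := by
      rw [hB]
      refine (Finset.card_insert_le _ _).trans (Nat.succ_le_succ ?_)
      refine (Finset.card_insert_le _ _).trans (Nat.succ_le_succ ?_)
      refine (Finset.card_insert_le _ _).trans (Nat.succ_le_succ ?_)
      refine (Finset.card_insert_le _ _).trans (Nat.succ_le_succ ?_)
      refine (Finset.card_insert_le _ _).trans (Nat.succ_le_succ ?_)
      refine (Finset.card_insert_le _ _).trans (Nat.succ_le_succ ?_)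
      exact le_of_eq (Finset.card_singleton m)
    have hex : ∃ z : ZMod n, z ∉ B := by
      by_contra h
      push_neg at h
      have : (Finset.univ : Finset (ZMod n)).card ≤ B.card :=
        Finset.card_le_card (fun z _ => h z)
      rw [Finset.card_univ, ZMod.card] at this
      omega
    obtain ⟨z, hz⟩ := hex
    have hzm : z ≠ m := by intro h; apply hz; simp [hB, h]
    obtain ⟨w, hw⟩ := hm z hzm
    have hadjx : H.Adj x w := by
      rw [hadj, hw]
      refine ⟨fun h => hz (by simp [hB, ← h]), ?_⟩
      rintro ⟨-, h | h⟩
      · apply hz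
        have : z = f x - 1 := by linear_combination -h
        simp [hB, this]
      · apply hz
        have : z = f x + 1 := by linear_combination h
        simp [hB, this]
    have hadjy : H.Adj w y := by
      rw [hadj, hw]
      refine ⟨fun h => hz (by simp [hB, h]), ?_⟩
      rintro ⟨-, h | h⟩
      · apply hz
        have : z = f y + 1 := by linear_combination h
        simp [hB, this]
      · apply hz
        have : z = f y - 1 := by linear_combination -h
        simp [hB, this]
    exact hadjx.reachable.trans hadjy.reachable


lemma exists_adj_of_reachable {W : Type*} {H : SimpleGraph W} {a b : W}
    (hab : a ≠ b) (h : H.Reachable a b) : ∃ c, H.Adj a c := by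
  obtain ⟨p⟩ := h
  cases p with
  | nil => exact absurd rfl hab
  | cons h q => exact ⟨_, h⟩

/-- A graph carried injectively into the cycle which misses a vertex of the
cycle is not 2-connected. -/
lemma not_twoConnected_of_proper [NeZero n] {W : Type} [Fintype W]
    (H : SimpleGraph W) (f : W → ZMod n)
    (hf : Function.Injective f)
    (hadj : ∀ a b, H.Adj a b → (cyc n).Adj (f a) (f b))
    (v : ZMod n) (hv : ∀ w, f w ≠ v) : ¬ TwoConnected H := by
  classical
  rintro ⟨hcard, hconn, hdel⟩
  haveI : Nonempty W := Fintype.card_pos_iff.mp (by omega)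
  -- find a boundary vertex a : f a + 1 not in the range of f
  have hbound : ∃ a : W, ∀ w, f w ≠ f a + 1 := by
    by_contra h
    push_neg at h
    obtain ⟨w0⟩ := ‹Nonempty W›
    have key : ∀ k : ℕ, ∃ w, f w = f w0 + (k : ZMod n) := by
      intro k
      induction k with
      | zero => exact ⟨w0, by simp⟩
      | succ k ih =>
        obtain ⟨w, hw⟩ := ih
        obtain ⟨w', hw'⟩ := h w
        exact ⟨w', by rw [hw', hw]; push_cast; ring⟩
    obtain ⟨w, hw⟩ := key (v - f w0).val
    apply hv w
    rw [hw, ← zmod_eq_add_val_sub]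
  obtain ⟨a, ha⟩ := hbound
  -- every neighbor of a maps to f a - 1
  have hnbr : ∀ b, H.Adj a b → f b = f a - 1 := by
    intro b hb
    obtain ⟨hne, h | h⟩ := hadj a b hb
    · linear_combination -h
    · exact absurd (by linear_combination h) (ha b)
  -- a has a neighbor c
  obtain ⟨b0, hb0⟩ : ∃ b0 : W, b0 ≠ a :=
    Fintype.exists_ne_of_one_lt_card (by omega) a
  obtain ⟨c, hac⟩ := exists_adj_of_reachable hb0.symm (hconn.preconnected a b0)
  have hfc : f c = f a - 1 := hnbr c hac
  have hanec : a ≠ c := hac.ne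
  -- third vertex b ≠ a, ≠ c
  have hthird : ∃ b : W, b ≠ a ∧ b ≠ c := by
    by_contra h
    push_neg at h
    have hsub : (Finset.univ : Finset W) ⊆ {a, c} := by
      intro x _
      rcases eq_or_ne x a with rfl | hxa
      · simp
      · simp [h x hxa]
    have h1 := Finset.card_le_card hsub
    have h2 : ({a, c} : Finset W).card ≤ 2 := (Finset.card_insert_le _ _).trans (by simp)
    rw [Finset.card_univ] at h1
    omega
  obtain ⟨b, hba, hbc⟩ := hthird
  -- delete c : then a is isolated, contradicting connectivity
  have hamem : a ∈ ({c}ᶜ : Set W) := by simp [hanec]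
  have hbmem : b ∈ ({c}ᶜ : Set W) := by simp [hbc]
  have hne : (⟨a, hamem⟩ : ({c}ᶜ : Set W)) ≠ ⟨b, hbmem⟩ := by
    intro h
    exact hba (Subtype.ext_iff.mp h).symm
  obtain ⟨d, hd⟩ := exists_adj_of_reachable hne ((hdel c).preconnected _ _)
  have hadj' : H.Adj a ↑d := hd
  have : (d : W) = c := hf (by rw [hnbr _ hadj', hfc])
  exact d.2 (by simpa using this)

end Cyc

theorem induced_subgraph_minimal_non_twoCographs_infinite :
    ∀ N : ℕ, ∃ (V : Type) (_ : Fintype V) (G : SimpleGraph V),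
      N ≤ Fintype.card V ∧ ¬ IsTwoCograph G ∧
        ∀ S : Finset V, S ≠ Finset.univ →
          IsTwoCograph (G.induce (S : Set V)) := by
  intro N
  set n := max N 8 with hn
  have hn8 : 8 ≤ n := le_max_right N 8
  haveI : NeZero n := ⟨by omega⟩
  refine ⟨ZMod n, inferInstance, cyc n, ?_, ?_, ?_⟩
  · rw [ZMod.card]; exact le_max_left N 8
  · -- not a 2-cograph : take S = univ
    intro hIs
    apply hIs Finset.univ
    have hmemall : ∀ x : ZMod n, x ∈ ((Finset.univ : Finset (ZMod n)) : Set (ZMod n)) := by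
      simp
    have hcard : Fintype.card (((Finset.univ : Finset (ZMod n)) : Set (ZMod n)) : Type) = n := by
      rw [Fintype.card_congr (Equiv.subtypeUnivEquiv hmemall), ZMod.card]
    constructor
    · -- the cycle itself is 2-connected
      refine ⟨by omega, ?_, ?_⟩
      · haveI : Nonempty (((Finset.univ : Finset (ZMod n)) : Set (ZMod n)) : Type) :=
          ⟨⟨0, hmemall 0⟩⟩
        exact connected_of_cycle_like (by omega) _ (fun a => (a : ZMod n))
          Subtype.val_injective (fun a b => Iff.rfl) 0
          (fun z _ => ⟨⟨z, hmemall z⟩, rfl⟩)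
      · intro v
        haveI : Nonempty (({v}ᶜ : Set (((Finset.univ : Finset (ZMod n)) : Set (ZMod n)) : Type)) : Type) := by
          refine ⟨⟨⟨(v : ZMod n) + 1, hmemall _⟩, ?_⟩⟩
          simp only [Set.mem_compl_iff, Set.mem_singleton_iff]
          intro h
          have : (v : ZMod n) + 1 = (v : ZMod n) := congrArg Subtype.val h
          have h2 := sub_eq_zero_of_eq this
          rw [add_sub_cancel_left] at h2
          exact natCast_ne_zero_of_lt (n := n) (k := 1) (by omega) (by omega) (by simpa using h2)
        refine connected_of_cycle_like (by omega) _ (fun a => ((a : _) : ZMod n))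
          ?_ (fun a b => Iff.rfl) (v : ZMod n) ?_
        · exact Subtype.val_injective.comp Subtype.val_injective
        · intro z hz
          refine ⟨⟨⟨z, hmemall z⟩, ?_⟩, rfl⟩
          simp only [Set.mem_compl_iff, Set.mem_singleton_iff]
          intro h
          exact hz (by rw [← congrArg Subtype.val h])
    · -- the complement of the cycle is 2-connected
      refine ⟨by omega, ?_, ?_⟩
      · haveI : Nonempty (((Finset.univ : Finset (ZMod n)) : Set (ZMod n)) : Type) :=
          ⟨⟨0, hmemall 0⟩⟩
        refine connected_of_cocycle_like hn8 _ (fun a => (a : ZMod n)) ?_ 0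
          (fun z _ => ⟨⟨z, hmemall z⟩, rfl⟩)
        intro a b
        rw [SimpleGraph.compl_adj]
        constructor
        · rintro ⟨h1, h2⟩
          exact ⟨fun h => h1 (Subtype.ext h), h2⟩
        · rintro ⟨h1, h2⟩
          exact ⟨fun h => h1 (congrArg Subtype.val h), h2⟩
      · intro v
        haveI : Nonempty (({v}ᶜ : Set (((Finset.univ : Finset (ZMod n)) : Set (ZMod n)) : Type)) : Type) := by
          refine ⟨⟨⟨(v : ZMod n) + 1, hmemall _⟩, ?_⟩⟩
          simp only [Set.mem_compl_iff, Set.mem_singleton_iff]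
          intro h
          have : (v : ZMod n) + 1 = (v : ZMod n) := congrArg Subtype.val h
          have h2 := sub_eq_zero_of_eq this
          rw [add_sub_cancel_left] at h2
          exact natCast_ne_zero_of_lt (n := n) (k := 1) (by omega) (by omega) (by simpa using h2)
        refine connected_of_cocycle_like hn8 _ (fun a => ((a : _) : ZMod n))
          ?_ (v : ZMod n) ?_
        · intro a b
          rw [SimpleGraph.comap_adj, SimpleGraph.compl_adj]
          constructor
          · rintro ⟨h1, h2⟩
            exact ⟨fun h => h1 (Subtype.ext h), h2⟩
          · rintro ⟨h1, h2⟩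
            exact ⟨fun h => h1 (congrArg Subtype.val h), h2⟩
        · intro z hz
          refine ⟨⟨⟨z, hmemall z⟩, ?_⟩, rfl⟩
          simp only [Set.mem_compl_iff, Set.mem_singleton_iff]
          intro h
          exact hz (by rw [← congrArg Subtype.val h])
  · -- every proper induced subgraph is a 2-cograph
    intro S hS T hT
    obtain ⟨v, hv⟩ : ∃ v : ZMod n, v ∉ S := by
      by_contra h
      push_neg at h
      exact hS (Finset.eq_univ_iff_forall.mpr h)
    refine not_twoConnected_of_proper _ (fun a => a.1.1)
      (fun a b h => Subtype.ext (Subtype.ext h)) (fun a b h => h) v ?_ hT.1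
    intro w h
    exact hv (h ▸ w.1.2)
end

section
/- Let G be an induced-minor-minimal non-2-cograph with at least 6 vertices, and let a-b-c-d be a path in G such that both b and c have degree two in G. Then a and d are adjacent in G. -/
open SimpleGraph

private lemma connected_of_hub {X : Type} {K : SimpleGraph X} (h : X)
    (hr : ∀ u, K.Reachable h u) : K.Connected :=
  (K.connected_iff).mpr ⟨fun u v => (hr u).symm.trans (hr v), ⟨h⟩⟩

private lemma preconnected_map {X Y : Type} {K : SimpleGraph X} {L : SimpleGraph Y} (f : X → Y)
    (hsurj : Function.Surjective f)
    (hadj : ∀ u v, K.Adj u v → f u = f v ∨ L.Adj (f u) (f v))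
    (h : K.Preconnected) : L.Preconnected := by
  have key : ∀ u v : X, K.Reachable u v → L.Reachable (f u) (f v) := by
    intro u v huv
    obtain ⟨p⟩ := huv
    induction p with
    | nil => exact Reachable.refl _
    | @cons x y z ha p ih =>
        rcases hadj _ _ ha with h1 | h1
        · rw [h1]; exact ih
        · exact h1.reachable.trans ih
  intro u v
  obtain ⟨u', rfl⟩ := hsurj u
  obtain ⟨v', rfl⟩ := hsurj v
  exact key _ _ (h u' v')

private lemma connected_map_s14 {X Y : Type} {K : SimpleGraph X} {L : SimpleGraph Y} (f : X → Y)
    (hsurj : Function.Surjective f)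
    (hadj : ∀ u v, K.Adj u v → f u = f v ∨ L.Adj (f u) (f v))
    (h : K.Connected) : L.Connected := by
  rw [connected_iff] at h ⊢
  exact ⟨preconnected_map f hsurj hadj h.1, ⟨f h.2.some⟩⟩

private def isoCompl {X Y : Type} {K : SimpleGraph X} {L : SimpleGraph Y} (e : K ≃g L) :
    Kᶜ ≃g Lᶜ where
  toEquiv := e.toEquiv
  map_rel_iff' := by
    intro u v
    simp only [SimpleGraph.compl_adj, e.map_rel_iff, ne_eq, EmbeddingLike.apply_eq_iff_eq, RelIso.coe_fn_toEquiv]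

private lemma twoConnected_iso {X Y : Type} [Fintype X] [Fintype Y] {K : SimpleGraph X}
    {L : SimpleGraph Y} (e : K ≃g L) (h : TwoConnected K) : TwoConnected L := by
  obtain ⟨hcard, hconn, hdel⟩ := h
  refine ⟨by rw [← Fintype.card_congr e.toEquiv]; exact hcard, ?_, ?_⟩
  · exact connected_map_s14 (f := e) e.toEquiv.surjective
      (fun u v h => Or.inr (e.map_rel_iff.mpr h)) hconn
  · intro v
    refine connected_map_s14 (K := K.induce ({e.symm v}ᶜ : Set X))
      (f := fun x => ⟨e x.1, by
        have hx := x.2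
        simp only [Set.mem_compl_iff, Set.mem_singleton_iff] at hx ⊢
        intro hh
        exact hx (e.toEquiv.eq_symm_apply.mpr hh)⟩) ?_ ?_ (hdel (e.symm v))
    · rintro ⟨y, hy⟩
      refine ⟨⟨e.symm y, by
        simp only [Set.mem_compl_iff, Set.mem_singleton_iff] at hy ⊢
        intro hh; exact hy (e.symm.toEquiv.injective hh)⟩, ?_⟩
      apply Subtype.ext
      simp
    · intro u w hadj
      exact Or.inr (by exact e.map_rel_iff.mpr hadj)

private lemma connected_induce_singleton {V : Type} (G : SimpleGraph V) (x : V) :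
    (G.induce ({x} : Set V)).Connected := by
  rw [connected_iff]
  refine ⟨fun u v => ?_, ⟨⟨x, rfl⟩⟩⟩
  have : u = v := Subtype.ext (by
    have hu := u.2; have hv := v.2
    simp only [Set.mem_singleton_iff] at hu hv
    rw [hu, hv])
  rw [this]

private lemma connected_induce_pair {V : Type} (G : SimpleGraph V) {x y : V}
    (hxy : G.Adj x y) : (G.induce ({x, y} : Set V)).Connected := by
  refine connected_of_hub ⟨x, by simp⟩ ?_
  rintro ⟨u, hu⟩
  simp only [Set.mem_insert_iff, Set.mem_singleton_iff] at hu
  rcases hu with h | h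
  · subst h
    exact Reachable.refl _
  · subst h
    exact SimpleGraph.Adj.reachable (by exact hxy)

private lemma isInducedMinor_induce {V : Type} (G : SimpleGraph V) (s : Set V) :
    IsInducedMinor G (G.induce s) := by
  refine ⟨fun w => {(w : V)}, fun w => ⟨w, rfl⟩,
    fun w => connected_induce_singleton G w, ?_, ?_⟩
  · intro w w' hww'
    simp only [Set.disjoint_singleton_left, Set.mem_singleton_iff]
    exact fun h => hww' (Subtype.ext h)
  · intro w w' h
    constructor
    · intro hadj
      exact ⟨w, rfl, w', rfl, hadj⟩
    · rintro ⟨p, hp, q, hq, hpq⟩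
      simp only [Set.mem_singleton_iff] at hp hq
      subst hp; subst hq
      exact hpq

private lemma exists_adj_ne {X : Type} [Fintype X] {K : SimpleGraph X} (h : TwoConnected K)
    (v w : X) (hvw : v ≠ w) : ∃ u, u ≠ w ∧ K.Adj v u := by
  classical
  obtain ⟨hcard, _, hdel⟩ := h
  have hconn := hdel w
  have hv : v ∈ ({w}ᶜ : Set X) := hvw
  have h2 : ∃ u' : ({w}ᶜ : Set X), u' ≠ ⟨v, hv⟩ := by
    have hcc : 2 ≤ (Finset.univ.erase w).card := by
      have := Finset.card_erase_of_mem (Finset.mem_univ w)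
      rw [this, Finset.card_univ]
      omega
    obtain ⟨p, hp, q, hq, hpq⟩ := Finset.one_lt_card.mp (by omega : 1 < (Finset.univ.erase w).card)
    by_cases hpv : p = v
    · exact ⟨⟨q, Finset.ne_of_mem_erase hq⟩, by
        intro hh
        exact hpq (hpv.trans (Subtype.mk_eq_mk.mp hh).symm)⟩
    · exact ⟨⟨p, Finset.ne_of_mem_erase hp⟩, by
        intro hh
        exact hpv (Subtype.mk_eq_mk.mp hh)⟩
  obtain ⟨u', hu'⟩ := h2
  obtain ⟨p⟩ := hconn ⟨v, hv⟩ u'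
  cases p with
  | nil => exact absurd rfl hu'.symm
  | @cons _ x _ ha q => exact ⟨x, x.2, ha⟩

private def induceFinsetUnivIso {X : Type} [Fintype X] (K : SimpleGraph X) :
    K.induce ((Finset.univ : Finset X) : Set X) ≃g K where
  toEquiv := Equiv.subtypeUnivEquiv (fun x => Finset.mem_coe.mpr (Finset.mem_univ x))
  map_rel_iff' := Iff.rfl

private lemma twoConnected_induce_univ {X : Type} [Fintype X] {K : SimpleGraph X}
    (h : TwoConnected K) :
    TwoConnected (K.induce ((Finset.univ : Finset X) : Set X)) :=
  twoConnected_iso (induceFinsetUnivIso K).symm h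

private lemma twoConnected_induce_univ_compl {X : Type} [Fintype X] {K : SimpleGraph X}
    (h : TwoConnected Kᶜ) :
    TwoConnected ((K.induce ((Finset.univ : Finset X) : Set X))ᶜ) :=
  twoConnected_iso (isoCompl (induceFinsetUnivIso K)).symm h

private lemma fiveCycle_twoConnected {X : Type} [Fintype X] {K : SimpleGraph X}
    (v : Fin 5 → X) (hinj : Function.Injective v) (hcov : ∀ u, ∃ i, u = v i)
    (he : ∀ i, K.Adj (v i) (v (i + 1))) : TwoConnected K := by
  have hcard : 3 ≤ Fintype.card X := by
    have h5 := Fintype.card_le_of_injective v hinj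
    simp only [Fintype.card_fin] at h5
    omega
  have echain : ∀ i : Fin 5, K.Reachable (v i) (v (i + 1)) := fun i => (he i).reachable
  refine ⟨hcard, ?_, ?_⟩
  · refine connected_of_hub (v 0) ?_
    intro u
    obtain ⟨i, rfl⟩ := hcov u
    have r1 : K.Reachable (v 0) (v 1) := echain 0
    have r2 : K.Reachable (v 0) (v 2) := r1.trans (echain 1)
    have r3 : K.Reachable (v 0) (v 3) := r2.trans (echain 2)
    have r4 : K.Reachable (v 0) (v 4) := r3.trans (echain 3)
    fin_cases i
    · exact Reachable.refl _
    · exact r1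
    · exact r2
    · exact r3
    · exact r4
  · intro w
    obtain ⟨k, rfl⟩ := hcov w
    have hmem : ∀ t : Fin 5, t ≠ 0 → v (k + t) ∈ ({v k}ᶜ : Set X) := by
      intro t ht
      simp only [Set.mem_compl_iff, Set.mem_singleton_iff]
      intro hh
      exact ht (by
        have h2 := hinj hh
        exact add_eq_left.mp h2)
    set L := K.induce ({v k}ᶜ : Set X) with hL
    let y : (t : Fin 5) → t ≠ 0 → ({v k}ᶜ : Set X) := fun t ht => ⟨v (k + t), hmem t ht⟩
    have yedge : ∀ (t : Fin 5) (ht : t ≠ 0) (ht' : t + 1 ≠ 0),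
        L.Adj (y t ht) (y (t + 1) ht') := by
      intro t ht ht'
      show K.Adj (v (k + t)) (v (k + (t + 1)))
      rw [← add_assoc]
      exact he (k + t)
    have e1 : L.Reachable (y 1 (by decide)) (y 2 (by decide)) := by
      have := (yedge 1 (by decide) (by decide)).reachable
      exact this
    have e2 : L.Reachable (y 2 (by decide)) (y 3 (by decide)) :=
      (yedge 2 (by decide) (by decide)).reachable
    have e3 : L.Reachable (y 3 (by decide)) (y 4 (by decide)) :=
      (yedge 3 (by decide) (by decide)).reachable
    refine connected_of_hub (y 1 (by decide)) ?_
    rintro ⟨u0, hu0⟩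
    obtain ⟨i, rfl⟩ := hcov u0
    have hik : i ≠ k := by
      intro hh
      subst hh
      simp at hu0
    have hdecomp : i = k + (i - k) := by
      rw [add_sub_cancel]
    have htne : i - k ≠ 0 := by
      intro hh
      apply hik
      rw [hdecomp, hh, add_zero]
    have hyeq : (⟨v i, hu0⟩ : ({v k}ᶜ : Set X)) = y (i - k) htne := by
      apply Subtype.ext
      show v i = v (k + (i - k))
      rw [← hdecomp]
    rw [hyeq]
    have key : ∀ (t : Fin 5) (ht : t ≠ 0), L.Reachable (y 1 (by decide)) (y t ht) := by
      intro t ht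
      fin_cases t
      · exact absurd rfl ht
      · exact Reachable.refl _
      · exact e1
      · exact e1.trans e2
      · exact e1.trans (e2.trans e3)
    exact key (i - k) htne

private def contractH {V : Type} (G : SimpleGraph V) (a b c : V) (hac : a ≠ c) :
    SimpleGraph {v : V // v ≠ b} where
  Adj u v := G.Adj ↑u ↑v ∨ ((u : V) = c ∧ (v : V) = a) ∨ ((u : V) = a ∧ (v : V) = c)
  symm := by
    constructor
    rintro u v (h | ⟨h1, h2⟩ | ⟨h1, h2⟩)
    · exact Or.inl h.symm
    · exact Or.inr (Or.inr ⟨h2, h1⟩)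
    · exact Or.inr (Or.inl ⟨h2, h1⟩)
  loopless := by
    constructor
    rintro u (h | ⟨h1, h2⟩ | ⟨h1, h2⟩)
    · exact G.irrefl h
    · exact hac (h2.symm.trans h1)
    · exact hac (h1.symm.trans h2)

private lemma contractH_adj {V : Type} (G : SimpleGraph V) (a b c : V) (hac : a ≠ c)
    (u v : {v : V // v ≠ b}) :
    (contractH G a b c hac).Adj u v ↔
      (G.Adj ↑u ↑v ∨ ((u : V) = c ∧ (v : V) = a) ∨ ((u : V) = a ∧ (v : V) = c)) := Iff.rfl


theorem path_three_basic {V : Type} [Fintype V] [DecidableEq V]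
    (G : SimpleGraph V) [DecidableRel G.Adj]
    (hG : IsIMMNon2Cograph G) (hcard : 6 ≤ Fintype.card V)
    (a b c d : V)
    (hab : a ≠ b) (hac : a ≠ c) (had : a ≠ d) (hbc : b ≠ c) (hbd : b ≠ d)
    (hcd : c ≠ d)
    (eab : G.Adj a b) (ebc : G.Adj b c) (ecd : G.Adj c d)
    (hdb : G.degree b = 2) (hdc : G.degree c = 2) :
    G.Adj a d := by
  classical
  -- neighborhood of b is {a, c}
  have hNb : ∀ v, G.Adj b v ↔ (v = a ∨ v = c) := by
    have hsub : ({a, c} : Finset V) ⊆ G.neighborFinset b := by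
      intro x hx
      rw [Finset.mem_insert, Finset.mem_singleton] at hx
      rw [SimpleGraph.mem_neighborFinset]
      rcases hx with rfl | rfl
      · exact eab.symm
      · exact ebc
    have heq : ({a, c} : Finset V) = G.neighborFinset b := by
      apply Finset.eq_of_subset_of_card_le hsub
      rw [SimpleGraph.card_neighborFinset_eq_degree, hdb,
        Finset.card_insert_of_notMem (by simp [hac]), Finset.card_singleton]
    intro v
    rw [← SimpleGraph.mem_neighborFinset, ← heq, Finset.mem_insert, Finset.mem_singleton]
  -- neighborhood of c is {b, d}
  have hNc : ∀ v, G.Adj c v ↔ (v = b ∨ v = d) := by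
    have hsub : ({b, d} : Finset V) ⊆ G.neighborFinset c := by
      intro x hx
      rw [Finset.mem_insert, Finset.mem_singleton] at hx
      rw [SimpleGraph.mem_neighborFinset]
      rcases hx with rfl | rfl
      · exact ebc.symm
      · exact ecd
    have heq : ({b, d} : Finset V) = G.neighborFinset c := by
      apply Finset.eq_of_subset_of_card_le hsub
      rw [SimpleGraph.card_neighborFinset_eq_degree, hdc,
        Finset.card_insert_of_notMem (by simp [hbd]), Finset.card_singleton]
    intro v
    rw [← SimpleGraph.mem_neighborFinset, ← heq, Finset.mem_insert, Finset.mem_singleton]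
  by_contra hnad
  -- Step 1 : G and Gᶜ are 2-connected
  obtain ⟨h2G, h2Gc⟩ : TwoConnected G ∧ TwoConnected Gᶜ := by
    have hnc := hG.1
    rw [IsTwoCograph] at hnc
    push_neg at hnc
    obtain ⟨S, hS1, hS2⟩ := hnc
    have hSuniv : S = Finset.univ := by
      by_contra hne
      obtain ⟨x, hx⟩ : ∃ x, x ∉ S := by
        by_contra hall
        push_neg at hall
        exact hne (Finset.eq_univ_iff_forall.mpr hall)
      have hlt : Fintype.card ((S : Set V)) < Fintype.card V := by
        have h' := Fintype.card_subtype_lt (p := fun v => v ∈ (S : Set V)) (x := x)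
          (by simpa using hx)
        convert h' using 2
      have hmin := hG.2 _ (G.induce (S : Set V)) (isInducedMinor_induce G (S : Set V)) hlt
      exact hmin Finset.univ ⟨twoConnected_induce_univ hS1, twoConnected_induce_univ_compl hS2⟩
    subst hSuniv
    exact ⟨twoConnected_iso (induceFinsetUnivIso G) hS1,
      twoConnected_iso (isoCompl (induceFinsetUnivIso G)) hS2⟩
  by_cases hex : ∃ r, r ≠ a ∧ r ≠ b ∧ r ≠ c ∧ r ≠ d ∧ G.Adj r a ∧ G.Adj r d
  · -- Case (i) : a five-cycle appears as an induced subgraph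
    obtain ⟨r, hra, hrb, hrc, hrd, era, erd⟩ := hex
    set S5 : Finset V := {a, b, c, d, r} with hS5
    have hmemS : ∀ x, x ∈ (S5 : Set V) ↔ (x = a ∨ x = b ∨ x = c ∨ x = d ∨ x = r) := by
      intro x; simp [hS5]
    -- the five vertices as elements of the subtype
    have hma : a ∈ (S5 : Set V) := (hmemS a).mpr (Or.inl rfl)
    have hmb : b ∈ (S5 : Set V) := (hmemS b).mpr (Or.inr (Or.inl rfl))
    have hmc : c ∈ (S5 : Set V) := (hmemS c).mpr (Or.inr (Or.inr (Or.inl rfl)))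
    have hmd : d ∈ (S5 : Set V) := (hmemS d).mpr (Or.inr (Or.inr (Or.inr (Or.inl rfl))))
    have hmr : r ∈ (S5 : Set V) := (hmemS r).mpr (Or.inr (Or.inr (Or.inr (Or.inr rfl))))
    -- 5-cycle a b c d r in the induced graph
    have h5 : TwoConnected (G.induce (S5 : Set V)) := by
      refine fiveCycle_twoConnected
        (![⟨a, hma⟩, ⟨b, hmb⟩, ⟨c, hmc⟩, ⟨d, hmd⟩, ⟨r, hmr⟩]) ?_ ?_ ?_
      · intro i j hij
        fin_cases i <;> fin_cases j <;>
          simp_all [Subtype.ext_iff, hab, hac, had, hbc, hbd, hcd,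
            hra.symm, hrb.symm, hrc.symm, hrd.symm, hab.symm, hac.symm, had.symm,
            hbc.symm, hbd.symm, hcd.symm, hra, hrb, hrc, hrd]
      · rintro ⟨u, hu⟩
        rcases (hmemS u).mp hu with rfl | rfl | rfl | rfl | rfl
        · exact ⟨0, rfl⟩
        · exact ⟨1, rfl⟩
        · exact ⟨2, rfl⟩
        · exact ⟨3, rfl⟩
        · exact ⟨4, rfl⟩
      · intro i
        fin_cases i
        · exact eab
        · exact ebc
        · exact ecd
        · exact erd.symm
        · exact era
    -- complement 5-cycle a c r b d
    have h5c : TwoConnected ((G.induce (S5 : Set V))ᶜ) := by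
      refine fiveCycle_twoConnected
        (![⟨a, hma⟩, ⟨c, hmc⟩, ⟨r, hmr⟩, ⟨b, hmb⟩, ⟨d, hmd⟩]) ?_ ?_ ?_
      · intro i j hij
        fin_cases i <;> fin_cases j <;>
          simp_all [Subtype.ext_iff, hab, hac, had, hbc, hbd, hcd,
            hra.symm, hrb.symm, hrc.symm, hrd.symm, hab.symm, hac.symm, had.symm,
            hbc.symm, hbd.symm, hcd.symm, hra, hrb, hrc, hrd]
      · rintro ⟨u, hu⟩
        rcases (hmemS u).mp hu with rfl | rfl | rfl | rfl | rfl
        · exact ⟨0, rfl⟩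
        · exact ⟨3, rfl⟩
        · exact ⟨1, rfl⟩
        · exact ⟨4, rfl⟩
        · exact ⟨2, rfl⟩
      · intro i
        fin_cases i
        · show ((G.induce (S5 : Set V))ᶜ).Adj ⟨a, hma⟩ ⟨c, hmc⟩
          refine (SimpleGraph.compl_adj _ _ _).mpr
            ⟨fun h => hac (Subtype.mk_eq_mk.mp h), fun h => ?_⟩
          rcases (hNc a).mp ((SimpleGraph.adj_comm _ _ _).mp h) with h' | h'
          · exact hab h'
          · exact had h'
        · show ((G.induce (S5 : Set V))ᶜ).Adj ⟨c, hmc⟩ ⟨r, hmr⟩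
          refine (SimpleGraph.compl_adj _ _ _).mpr
            ⟨fun h => hrc (Subtype.mk_eq_mk.mp h).symm, fun h => ?_⟩
          rcases (hNc r).mp h with h' | h'
          · exact hrb h'
          · exact hrd h'
        · show ((G.induce (S5 : Set V))ᶜ).Adj ⟨r, hmr⟩ ⟨b, hmb⟩
          refine (SimpleGraph.compl_adj _ _ _).mpr
            ⟨fun h => hrb (Subtype.mk_eq_mk.mp h), fun h => ?_⟩
          rcases (hNb r).mp ((SimpleGraph.adj_comm _ _ _).mp h) with h' | h'
          · exact hra h'
          · exact hrc h'
        · show ((G.induce (S5 : Set V))ᶜ).Adj ⟨b, hmb⟩ ⟨d, hmd⟩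
          refine (SimpleGraph.compl_adj _ _ _).mpr
            ⟨fun h => hbd (Subtype.mk_eq_mk.mp h), fun h => ?_⟩
          rcases (hNb d).mp h with h' | h'
          · exact had h'.symm
          · exact hcd h'.symm
        · show ((G.induce (S5 : Set V))ᶜ).Adj ⟨d, hmd⟩ ⟨a, hma⟩
          refine (SimpleGraph.compl_adj _ _ _).mpr
            ⟨fun h => had (Subtype.mk_eq_mk.mp h).symm, fun h => ?_⟩
          exact hnad ((SimpleGraph.adj_comm _ _ _).mp h)
    -- contradiction with minimality
    obtain ⟨x, hx⟩ : ∃ x, x ∉ S5 := by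
      by_contra hall
      push_neg at hall
      have : Fintype.card V ≤ S5.card := by
        rw [← Finset.card_univ]
        exact Finset.card_le_card (fun y _ => hall y)
      have hle : S5.card ≤ 5 := by
        apply le_trans (Finset.card_insert_le _ _)
        apply Nat.succ_le_succ
        apply le_trans (Finset.card_insert_le _ _)
        apply Nat.succ_le_succ
        apply le_trans (Finset.card_insert_le _ _)
        apply Nat.succ_le_succ
        apply le_trans (Finset.card_insert_le _ _)
        apply Nat.succ_le_succ
        simp
      omega
    have hlt : Fintype.card ((S5 : Set V)) < Fintype.card V := by
      have h' := Fintype.card_subtype_lt (p := fun v => v ∈ (S5 : Set V)) (x := x)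
        (by simpa using hx)
      convert h' using 2
    have hmin := hG.2 _ (G.induce (S5 : Set V)) (isInducedMinor_induce G (S5 : Set V)) hlt
    exact hmin Finset.univ ⟨twoConnected_induce_univ h5, twoConnected_induce_univ_compl h5c⟩
  · -- Case (ii) : contract the edge bc
    push_neg at hex
    set H := contractH G a b c hac with hHdef
    set xa : {v : V // v ≠ b} := ⟨a, hab⟩ with hxa
    set xc : {v : V // v ≠ b} := ⟨c, Ne.symm hbc⟩ with hxc
    set xd : {v : V // v ≠ b} := ⟨d, Ne.symm hbd⟩ with hxd
    -- H is an induced minor of G with fewer vertices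
    have hminor : IsInducedMinor G H := by
      refine ⟨fun w => if (w : V) = c then ({b, c} : Set V) else {(w : V)}, ?_, ?_, ?_, ?_⟩
      · intro w
        beta_reduce
        by_cases h : (w : V) = c
        · rw [if_pos h]; exact ⟨b, Or.inl rfl⟩
        · rw [if_neg h]; exact ⟨w, rfl⟩
      · intro w
        beta_reduce
        by_cases h : (w : V) = c
        · rw [if_pos h]; exact connected_induce_pair G ebc
        · rw [if_neg h]; exact connected_induce_singleton G w
      · intro w w' hne
        beta_reduce
        by_cases h : (w : V) = c <;> by_cases h' : (w' : V) = c
        · exact absurd (Subtype.ext (h.trans h'.symm)) hne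
        · rw [if_pos h, if_neg h']
          refine Set.disjoint_left.mpr ?_
          intro x hx hx'
          simp only [Set.mem_insert_iff, Set.mem_singleton_iff] at hx hx'
          subst hx'
          rcases hx with h2 | h2
          · exact w'.2 h2
          · exact h' h2
        · rw [if_neg h, if_pos h']
          refine Set.disjoint_left.mpr ?_
          intro x hx hx'
          simp only [Set.mem_insert_iff, Set.mem_singleton_iff] at hx hx'
          subst hx
          rcases hx' with h2 | h2
          · exact w.2 h2
          · exact h h2
        · rw [if_neg h, if_neg h']
          refine Set.disjoint_left.mpr ?_
          intro x hx hx'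
          simp only [Set.mem_singleton_iff] at hx hx'
          exact hne (Subtype.ext (hx ▸ hx'))
      · intro w w' hne
        beta_reduce
        rw [contractH_adj]
        by_cases h : (w : V) = c <;> by_cases h' : (w' : V) = c
        · exact absurd (Subtype.ext (h.trans h'.symm)) hne
        · rw [if_pos h, if_neg h']
          constructor
          · rintro (hadj | ⟨h1, h2⟩ | ⟨h1, h2⟩)
            · exact ⟨(w : V), Or.inr h, (w' : V), rfl, hadj⟩
            · exact ⟨b, Or.inl rfl, (w' : V), rfl, by rw [h2]; exact eab.symm⟩
            · exact absurd (h1.symm.trans h) hac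
          · rintro ⟨p, hp, q, hq, hpq⟩
            simp only [Set.mem_insert_iff, Set.mem_singleton_iff] at hp hq
            subst hq
            rcases hp with rfl | rfl
            · rcases (hNb (w' : V)).mp hpq with h2 | h2
              · exact Or.inr (Or.inl ⟨h, h2⟩)
              · exact absurd h2 h'
            · exact Or.inl (by rw [h]; exact hpq)
        · rw [if_neg h, if_pos h']
          constructor
          · rintro (hadj | ⟨h1, h2⟩ | ⟨h1, h2⟩)
            · exact ⟨(w : V), rfl, (w' : V), Or.inr h', hadj⟩
            · exact absurd (h2.symm.trans h') hac
            · exact ⟨(w : V), rfl, b, Or.inl rfl, by rw [h1]; exact eab⟩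
          · rintro ⟨p, hp, q, hq, hpq⟩
            simp only [Set.mem_insert_iff, Set.mem_singleton_iff] at hp hq
            subst hp
            rcases hq with rfl | rfl
            · rcases (hNb (w : V)).mp hpq.symm with h2 | h2
              · exact Or.inr (Or.inr ⟨h2, h'⟩)
              · exact absurd h2 h
            · exact Or.inl (by rw [h']; exact hpq)
        · rw [if_neg h, if_neg h']
          constructor
          · rintro (hadj | ⟨h1, h2⟩ | ⟨h1, h2⟩)
            · exact ⟨(w : V), rfl, (w' : V), rfl, hadj⟩
            · exact absurd h1 h
            · exact absurd h2 h'
          · rintro ⟨p, hp, q, hq, hpq⟩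
            simp only [Set.mem_singleton_iff] at hp hq
            subst hp; subst hq
            exact Or.inl hpq
    have hcardW : Fintype.card {v : V // v ≠ b} < Fintype.card V :=
      Fintype.card_subtype_lt (p := fun v => v ≠ b) (x := b) (by simp)
    have card3W : 3 ≤ Fintype.card {v : V // v ≠ b} := by
      have hinj : Function.Injective (![xa, xc, xd] : Fin 3 → {v : V // v ≠ b}) := by
        intro i j hij
        fin_cases i <;> fin_cases j <;>
          simp_all [hxa, hxc, hxd, Subtype.ext_iff, hac, hcd, had, hac.symm, hcd.symm, had.symm]
      have := Fintype.card_le_of_injective _ hinj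
      simpa using this
    -- H is 2-connected
    have h2H : TwoConnected H := by
      refine ⟨card3W, ?_, ?_⟩
      · refine connected_map_s14 (K := G) (f := fun v => if h : v = b then xc else ⟨v, h⟩)
          ?_ ?_ h2G.2.1
        · intro w
          exact ⟨(w : V), by beta_reduce; rw [dif_neg w.2]⟩
        · intro u v huv
          beta_reduce
          by_cases hu : u = b <;> by_cases hv : v = b
          · exact absurd huv (by rw [hu, hv]; exact G.irrefl)
          · subst hu
            rcases (hNb v).mp huv with rfl | rfl
            · rw [dif_pos rfl, dif_neg hv]
              exact Or.inr (Or.inr (Or.inl ⟨rfl, rfl⟩))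
            · rw [dif_pos rfl, dif_neg hv]
              exact Or.inl (Subtype.ext rfl)
          · subst hv
            rcases (hNb u).mp huv.symm with rfl | rfl
            · rw [dif_pos rfl, dif_neg hu]
              exact Or.inr (Or.inr (Or.inr ⟨rfl, rfl⟩))
            · rw [dif_pos rfl, dif_neg hu]
              exact Or.inl (Subtype.ext rfl)
          · rw [dif_neg hu, dif_neg hv]
            exact Or.inr (Or.inl huv)
      · intro w
        by_cases hwc : (w : V) = c
        · have hw : w = xc := Subtype.ext hwc
          subst hw
          refine connected_map_s14 (K := G.induce ({b}ᶜ : Set V))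
            (f := fun u => if h : (u : V) = c then
              (⟨xd, fun hh => hcd (Subtype.mk_eq_mk.mp hh).symm⟩ : ({xc}ᶜ : Set {v : V // v ≠ b}))
              else ⟨⟨(u : V), u.2⟩, fun hh => h (Subtype.mk_eq_mk.mp hh)⟩)
            ?_ ?_ (h2G.2.2 b)
          · rintro ⟨⟨yv, hyb⟩, hyc⟩
            have hyc' : yv ≠ c := by
              intro hh
              exact hyc (Subtype.ext hh)
            refine ⟨⟨yv, hyb⟩, ?_⟩
            beta_reduce
            rw [dif_neg hyc']
          · intro u v huv
            beta_reduce
            have huv' : G.Adj (u : V) (v : V) := huv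
            by_cases huc : (u : V) = c <;> by_cases hvc : (v : V) = c
            · rw [huc, hvc] at huv'
              exact absurd huv' (G.irrefl)
            · rw [huc] at huv'
              rcases (hNc (v : V)).mp huv' with h2 | h2
              · exact absurd h2 v.2
              · rw [dif_pos huc, dif_neg hvc]
                exact Or.inl (Subtype.ext (Subtype.ext h2.symm))
            · rw [hvc] at huv'
              rcases (hNc (u : V)).mp huv'.symm with h2 | h2
              · exact absurd h2 u.2
              · rw [dif_neg huc, dif_pos hvc]
                exact Or.inl (Subtype.ext (Subtype.ext h2))
            · rw [dif_neg huc, dif_neg hvc]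
              exact Or.inr (Or.inl huv')
        · refine connected_map_s14 (K := G.induce ({(w : V)}ᶜ : Set V))
            (f := fun u => if h : (u : V) = b then
              (⟨xc, fun hh => hwc ((Subtype.mk_eq_mk.mp hh).symm)⟩ :
                ({w}ᶜ : Set {v : V // v ≠ b}))
              else ⟨⟨(u : V), h⟩, fun hh => (u.2 : ¬ (u : V) = (w : V))
                (Subtype.mk_eq_mk.mp hh)⟩)
            ?_ ?_ (h2G.2.2 (w : V))
          · rintro ⟨⟨yv, hyb⟩, hyw⟩
            have hyw' : yv ≠ (w : V) := by
              intro hh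
              exact hyw (Subtype.ext hh)
            refine ⟨⟨yv, hyw'⟩, ?_⟩
            beta_reduce
            rw [dif_neg hyb]
          · intro u v huv
            beta_reduce
            have huv' : G.Adj (u : V) (v : V) := huv
            by_cases hub : (u : V) = b <;> by_cases hvb : (v : V) = b
            · rw [hub, hvb] at huv'
              exact absurd huv' (G.irrefl)
            · rw [hub] at huv'
              rw [dif_pos hub, dif_neg hvb]
              rcases (hNb (v : V)).mp huv' with h2 | h2
              · exact Or.inr (Or.inr (Or.inl ⟨rfl, h2⟩))
              · exact Or.inl (Subtype.ext (Subtype.ext h2.symm))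
            · rw [hvb] at huv'
              rw [dif_neg hub, dif_pos hvb]
              rcases (hNb (u : V)).mp huv'.symm with h2 | h2
              · exact Or.inr (Or.inr (Or.inr ⟨h2, rfl⟩))
              · exact Or.inl (Subtype.ext (Subtype.ext h2))
            · rw [dif_neg hub, dif_neg hvb]
              exact Or.inr (Or.inl huv')
    -- two distinct vertices outside {a, b, c, d}
    obtain ⟨r1, hr1, r2, hr2, hr12⟩ :
        ∃ r1, (r1 ≠ a ∧ r1 ≠ b ∧ r1 ≠ c ∧ r1 ≠ d) ∧
          ∃ r2, (r2 ≠ a ∧ r2 ≠ b ∧ r2 ≠ c ∧ r2 ≠ d) ∧ r1 ≠ r2 := by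
      have h4 : ({a, b, c, d} : Finset V).card ≤ 4 := by
        apply le_trans (Finset.card_insert_le _ _)
        apply Nat.succ_le_succ
        apply le_trans (Finset.card_insert_le _ _)
        apply Nat.succ_le_succ
        apply le_trans (Finset.card_insert_le _ _)
        apply Nat.succ_le_succ
        simp
      have hb : (Finset.univ : Finset V).card ≤
          ((Finset.univ : Finset V) \ ({a, b, c, d} : Finset V)).card +
            ({a, b, c, d} : Finset V).card := Finset.card_le_card_sdiff_add_card
      rw [Finset.card_univ] at hb
      obtain ⟨p, hp, q, hq, hpq⟩ := Finset.one_lt_card.mp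
        (by omega : 1 < ((Finset.univ : Finset V) \ ({a, b, c, d} : Finset V)).card)
      simp only [Finset.mem_sdiff, Finset.mem_univ, Finset.mem_insert,
        Finset.mem_singleton, true_and] at hp hq
      push_neg at hp hq
      exact ⟨p, ⟨hp.1, hp.2.1, hp.2.2.1, hp.2.2.2⟩, q, ⟨hq.1, hq.2.1, hq.2.2.1, hq.2.2.2⟩, hpq⟩
    -- someone outside is not adjacent to d
    obtain ⟨u0, hu0a, hu0b, hu0c, hu0d, hu0nd⟩ :
        ∃ u, u ≠ a ∧ u ≠ b ∧ u ≠ c ∧ u ≠ d ∧ ¬G.Adj u d := by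
      by_contra hcon
      push_neg at hcon
      obtain ⟨u, hub, hau⟩ := exists_adj_ne h2G a b hab
      by_cases h1 : u = a
      · rw [h1] at hau; exact G.irrefl hau
      by_cases h2 : u = c
      · rw [h2] at hau
        rcases (hNc a).mp hau.symm with h3 | h3
        · exact hab h3
        · exact had h3
      by_cases h3 : u = d
      · rw [h3] at hau; exact hnad hau
      exact hex u h1 hub h2 h3 hau.symm (hcon u h1 hub h2 h3)
    -- someone outside is not adjacent to a
    obtain ⟨w0, hw0a, hw0b, hw0c, hw0d, hw0na⟩ :
        ∃ u, u ≠ a ∧ u ≠ b ∧ u ≠ c ∧ u ≠ d ∧ ¬G.Adj u a := by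
      by_contra hcon
      push_neg at hcon
      obtain ⟨u, huc, hdu⟩ := exists_adj_ne h2G d c (Ne.symm hcd)
      by_cases h1 : u = a
      · rw [h1] at hdu; exact hnad hdu.symm
      by_cases h2 : u = b
      · rw [h2] at hdu
        rcases (hNb d).mp hdu.symm with h3 | h3
        · exact had h3.symm
        · exact hcd h3.symm
      by_cases h4 : u = d
      · rw [h4] at hdu; exact G.irrefl hdu
      exact hex u h1 h2 huc h4 (hcon u h1 h2 huc h4) hdu.symm
    -- adjacency facts in the complement of H
    have Fc : ∀ u : {v : V // v ≠ b}, (u : V) ≠ a → (u : V) ≠ c → (u : V) ≠ d →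
        Hᶜ.Adj xc u := by
      intro u h1 h2 h3
      rw [SimpleGraph.compl_adj]
      refine ⟨fun hh => h2 (Subtype.mk_eq_mk.mp hh).symm, ?_⟩
      rw [hHdef, contractH_adj]
      rintro (hadj | ⟨_, hha⟩ | ⟨hha, _⟩)
      · rcases (hNc (u : V)).mp hadj with h4 | h4
        · exact u.2 h4
        · exact h3 h4
      · exact h1 hha
      · exact hac hha.symm
    have Fa : ∀ u : {v : V // v ≠ b}, (u : V) ≠ a → (u : V) ≠ c → ¬G.Adj (u : V) a →
        Hᶜ.Adj u xa := by
      intro u h1 h2 hnA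
      rw [SimpleGraph.compl_adj]
      refine ⟨fun hh => h1 (Subtype.mk_eq_mk.mp hh), ?_⟩
      rw [hHdef, contractH_adj]
      rintro (hadj | ⟨h3, _⟩ | ⟨_, h4⟩)
      · exact hnA hadj
      · exact h2 h3
      · exact hac h4
    have Fd : ∀ u : {v : V // v ≠ b}, (u : V) ≠ a → (u : V) ≠ c → (u : V) ≠ d →
        ¬G.Adj (u : V) d → Hᶜ.Adj u xd := by
      intro u h1 h2 h3 hnD
      rw [SimpleGraph.compl_adj]
      refine ⟨fun hh => h3 (Subtype.mk_eq_mk.mp hh), ?_⟩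
      rw [hHdef, contractH_adj]
      rintro (hadj | ⟨h4, h5⟩ | ⟨h4, h5⟩)
      · exact hnD hadj
      · exact h2 h4
      · exact hcd h5.symm
    have Fad : Hᶜ.Adj xa xd := by
      rw [SimpleGraph.compl_adj]
      refine ⟨fun hh => had (Subtype.mk_eq_mk.mp hh), ?_⟩
      rw [hHdef, contractH_adj]
      rintro (hadj | ⟨h1, _⟩ | ⟨_, h2⟩)
      · exact hnad hadj
      · exact hac h1
      · exact hcd h2.symm
    -- membership helper
    have memc : ∀ (w x : {v : V // v ≠ b}), (x : V) ≠ (w : V) →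
        x ∈ ({w}ᶜ : Set {v : V // v ≠ b}) := by
      intro w x h
      simp only [Set.mem_compl_iff, Set.mem_singleton_iff]
      exact fun hh => h (by rw [hh])
    -- Hᶜ is 2-connected
    have h2Hc : TwoConnected Hᶜ := by
      refine ⟨card3W, ?_, ?_⟩
      · -- connectivity of Hᶜ
        have hroute : Hᶜ.Reachable xc xa ∧ Hᶜ.Reachable xc xd := by
          set r1W : {v : V // v ≠ b} := ⟨r1, hr1.2.1⟩ with hr1W
          have s1 : Hᶜ.Adj xc r1W := Fc r1W hr1.1 hr1.2.2.1 hr1.2.2.2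
          by_cases hadj : G.Adj r1 a
          · have hnd : ¬G.Adj r1 d := hex r1 hr1.1 hr1.2.1 hr1.2.2.1 hr1.2.2.2 hadj
            have s2 : Hᶜ.Adj r1W xd := Fd r1W hr1.1 hr1.2.2.1 hr1.2.2.2 hnd
            have rd : Hᶜ.Reachable xc xd := s1.reachable.trans s2.reachable
            exact ⟨rd.trans Fad.symm.reachable, rd⟩
          · have s2 : Hᶜ.Adj r1W xa := Fa r1W hr1.1 hr1.2.2.1 hadj
            have ra : Hᶜ.Reachable xc xa := s1.reachable.trans s2.reachable
            exact ⟨ra, ra.trans Fad.reachable⟩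
        refine connected_of_hub xc ?_
        intro u
        by_cases h1 : (u : V) = c
        · rw [show u = xc from Subtype.ext h1]
        by_cases h2 : (u : V) = a
        · rw [show u = xa from Subtype.ext h2]
          exact hroute.1
        by_cases h3 : (u : V) = d
        · rw [show u = xd from Subtype.ext h3]
          exact hroute.2
        · exact (Fc u h2 h1 h3).reachable
      · -- deletions
        intro w
        by_cases hw1 : (w : V) = c
        · -- delete the contracted vertex
          have hw : w = xc := Subtype.ext hw1
          subst hw
          have hmema : xa ∈ ({xc}ᶜ : Set {v : V // v ≠ b}) := memc _ _ hac
          have hmemd : xd ∈ ({xc}ᶜ : Set {v : V // v ≠ b}) := memc _ _ (Ne.symm hcd)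
          refine connected_of_hub ⟨xa, hmema⟩ ?_
          rintro ⟨u, hu⟩
          have huc : (u : V) ≠ c := by
            intro hh
            simp only [Set.mem_compl_iff, Set.mem_singleton_iff] at hu
            exact hu (Subtype.ext hh)
          by_cases h2 : (u : V) = a
          · have : (⟨u, hu⟩ : ({xc}ᶜ : Set {v : V // v ≠ b})) = ⟨xa, hmema⟩ :=
              Subtype.ext (Subtype.ext h2)
            rw [this]
          by_cases h3 : (u : V) = d
          · have : (⟨u, hu⟩ : ({xc}ᶜ : Set {v : V // v ≠ b})) = ⟨xd, hmemd⟩ :=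
              Subtype.ext (Subtype.ext h3)
            rw [this]
            exact (show (Hᶜ.induce ({xc}ᶜ : Set {v : V // v ≠ b})).Adj ⟨xa, hmema⟩ ⟨xd, hmemd⟩
              from Fad).reachable
          · by_cases hadj : G.Adj (u : V) a
            · have hnd : ¬G.Adj (u : V) d := hex (u : V) h2 u.2 huc h3 hadj
              exact ((show (Hᶜ.induce ({xc}ᶜ : Set {v : V // v ≠ b})).Adj ⟨xa, hmema⟩
                  ⟨xd, hmemd⟩ from Fad).reachable).trans
                (show (Hᶜ.induce ({xc}ᶜ : Set {v : V // v ≠ b})).Adj ⟨xd, hmemd⟩ ⟨u, hu⟩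
                  from (Fd u h2 huc h3 hnd).symm).reachable
            · exact (show (Hᶜ.induce ({xc}ᶜ : Set {v : V // v ≠ b})).Adj ⟨xa, hmema⟩ ⟨u, hu⟩
                from (Fa u h2 huc hadj).symm).reachable
        by_cases hw2 : (w : V) = a
        · -- delete a
          have hw : w = xa := Subtype.ext hw2
          subst hw
          have hmemc : xc ∈ ({xa}ᶜ : Set {v : V // v ≠ b}) := memc _ _ (Ne.symm hac)
          have hmemd : xd ∈ ({xa}ᶜ : Set {v : V // v ≠ b}) := memc _ _ (Ne.symm had)
          have hmemu0 : (⟨u0, hu0b⟩ : {v : V // v ≠ b}) ∈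
              ({xa}ᶜ : Set {v : V // v ≠ b}) := memc _ _ hu0a
          refine connected_of_hub ⟨xc, hmemc⟩ ?_
          rintro ⟨u, hu⟩
          have hua : (u : V) ≠ a := by
            intro hh
            simp only [Set.mem_compl_iff, Set.mem_singleton_iff] at hu
            exact hu (Subtype.ext hh)
          by_cases h1 : (u : V) = c
          · have : (⟨u, hu⟩ : ({xa}ᶜ : Set {v : V // v ≠ b})) = ⟨xc, hmemc⟩ :=
              Subtype.ext (Subtype.ext h1)
            rw [this]
          by_cases h3 : (u : V) = d
          · have : (⟨u, hu⟩ : ({xa}ᶜ : Set {v : V // v ≠ b})) = ⟨xd, hmemd⟩ :=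
              Subtype.ext (Subtype.ext h3)
            rw [this]
            exact ((show (Hᶜ.induce ({xa}ᶜ : Set {v : V // v ≠ b})).Adj ⟨xc, hmemc⟩
                ⟨⟨u0, hu0b⟩, hmemu0⟩ from Fc _ hu0a hu0c hu0d).reachable).trans
              (show (Hᶜ.induce ({xa}ᶜ : Set {v : V // v ≠ b})).Adj ⟨⟨u0, hu0b⟩, hmemu0⟩
                ⟨xd, hmemd⟩ from Fd _ hu0a hu0c hu0d hu0nd).reachable
          · exact (show (Hᶜ.induce ({xa}ᶜ : Set {v : V // v ≠ b})).Adj ⟨xc, hmemc⟩ ⟨u, hu⟩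
              from Fc u hua h1 h3).reachable
        by_cases hw3 : (w : V) = d
        · -- delete d
          have hw : w = xd := Subtype.ext hw3
          subst hw
          have hmemc : xc ∈ ({xd}ᶜ : Set {v : V // v ≠ b}) := memc _ _ hcd
          have hmema : xa ∈ ({xd}ᶜ : Set {v : V // v ≠ b}) := memc _ _ had
          have hmemw0 : (⟨w0, hw0b⟩ : {v : V // v ≠ b}) ∈
              ({xd}ᶜ : Set {v : V // v ≠ b}) := memc _ _ hw0d
          refine connected_of_hub ⟨xc, hmemc⟩ ?_
          rintro ⟨u, hu⟩
          have hud : (u : V) ≠ d := by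
            intro hh
            simp only [Set.mem_compl_iff, Set.mem_singleton_iff] at hu
            exact hu (Subtype.ext hh)
          by_cases h1 : (u : V) = c
          · have : (⟨u, hu⟩ : ({xd}ᶜ : Set {v : V // v ≠ b})) = ⟨xc, hmemc⟩ :=
              Subtype.ext (Subtype.ext h1)
            rw [this]
          by_cases h2 : (u : V) = a
          · have : (⟨u, hu⟩ : ({xd}ᶜ : Set {v : V // v ≠ b})) = ⟨xa, hmema⟩ :=
              Subtype.ext (Subtype.ext h2)
            rw [this]
            exact ((show (Hᶜ.induce ({xd}ᶜ : Set {v : V // v ≠ b})).Adj ⟨xc, hmemc⟩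
                ⟨⟨w0, hw0b⟩, hmemw0⟩ from Fc _ hw0a hw0c hw0d).reachable).trans
              (show (Hᶜ.induce ({xd}ᶜ : Set {v : V // v ≠ b})).Adj ⟨⟨w0, hw0b⟩, hmemw0⟩
                ⟨xa, hmema⟩ from Fa _ hw0a hw0c hw0na).reachable
          · exact (show (Hᶜ.induce ({xd}ᶜ : Set {v : V // v ≠ b})).Adj ⟨xc, hmemc⟩ ⟨u, hu⟩
              from Fc u h2 h1 hud).reachable
        · -- delete a vertex outside {a, c, d}
          have hmemc : xc ∈ ({w}ᶜ : Set {v : V // v ≠ b}) := memc _ _ (Ne.symm hw1)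
          have hmema : xa ∈ ({w}ᶜ : Set {v : V // v ≠ b}) := memc _ _ (Ne.symm hw2)
          have hmemd : xd ∈ ({w}ᶜ : Set {v : V // v ≠ b}) := memc _ _ (Ne.symm hw3)
          obtain ⟨r', hr'a, hr'b, hr'c, hr'd, hr'w⟩ :
              ∃ r', r' ≠ a ∧ r' ≠ b ∧ r' ≠ c ∧ r' ≠ d ∧ r' ≠ (w : V) := by
            by_cases h : r1 = (w : V)
            · exact ⟨r2, hr2.1, hr2.2.1, hr2.2.2.1, hr2.2.2.2, by rw [← h]; exact hr12.symm⟩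
            · exact ⟨r1, hr1.1, hr1.2.1, hr1.2.2.1, hr1.2.2.2, h⟩
          have hmemr' : (⟨r', hr'b⟩ : {v : V // v ≠ b}) ∈
              ({w}ᶜ : Set {v : V // v ≠ b}) := memc _ _ hr'w
          have hstep : (Hᶜ.induce ({w}ᶜ : Set {v : V // v ≠ b})).Adj ⟨xc, hmemc⟩
              ⟨⟨r', hr'b⟩, hmemr'⟩ := Fc _ hr'a hr'c hr'd
          have hroute : (Hᶜ.induce ({w}ᶜ : Set {v : V // v ≠ b})).Reachable ⟨xc, hmemc⟩
                ⟨xa, hmema⟩ ∧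
              (Hᶜ.induce ({w}ᶜ : Set {v : V // v ≠ b})).Reachable ⟨xc, hmemc⟩
                ⟨xd, hmemd⟩ := by
            by_cases hadj : G.Adj r' a
            · have hnd : ¬G.Adj r' d := hex r' hr'a hr'b hr'c hr'd hadj
              have rd : (Hᶜ.induce ({w}ᶜ : Set {v : V // v ≠ b})).Reachable ⟨xc, hmemc⟩
                  ⟨xd, hmemd⟩ := hstep.reachable.trans
                (show (Hᶜ.induce ({w}ᶜ : Set {v : V // v ≠ b})).Adj ⟨⟨r', hr'b⟩, hmemr'⟩
                  ⟨xd, hmemd⟩ from Fd _ hr'a hr'c hr'd hnd).reachable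
              exact ⟨rd.trans (show (Hᶜ.induce ({w}ᶜ : Set {v : V // v ≠ b})).Adj
                ⟨xd, hmemd⟩ ⟨xa, hmema⟩ from Fad.symm).reachable, rd⟩
            · have ra : (Hᶜ.induce ({w}ᶜ : Set {v : V // v ≠ b})).Reachable ⟨xc, hmemc⟩
                  ⟨xa, hmema⟩ := hstep.reachable.trans
                (show (Hᶜ.induce ({w}ᶜ : Set {v : V // v ≠ b})).Adj ⟨⟨r', hr'b⟩, hmemr'⟩
                  ⟨xa, hmema⟩ from Fa _ hr'a hr'c hadj).reachable
              exact ⟨ra, ra.trans (show (Hᶜ.induce ({w}ᶜ : Set {v : V // v ≠ b})).Adj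
                ⟨xa, hmema⟩ ⟨xd, hmemd⟩ from Fad).reachable⟩
          refine connected_of_hub ⟨xc, hmemc⟩ ?_
          rintro ⟨u, hu⟩
          by_cases h1 : (u : V) = c
          · have : (⟨u, hu⟩ : ({w}ᶜ : Set {v : V // v ≠ b})) = ⟨xc, hmemc⟩ :=
              Subtype.ext (Subtype.ext h1)
            rw [this]
          by_cases h2 : (u : V) = a
          · have : (⟨u, hu⟩ : ({w}ᶜ : Set {v : V // v ≠ b})) = ⟨xa, hmema⟩ :=
              Subtype.ext (Subtype.ext h2)
            rw [this]
            exact hroute.1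
          by_cases h3 : (u : V) = d
          · have : (⟨u, hu⟩ : ({w}ᶜ : Set {v : V // v ≠ b})) = ⟨xd, hmemd⟩ :=
              Subtype.ext (Subtype.ext h3)
            rw [this]
            exact hroute.2
          · exact (show (Hᶜ.induce ({w}ᶜ : Set {v : V // v ≠ b})).Adj ⟨xc, hmemc⟩ ⟨u, hu⟩
              from Fc u h2 h1 h3).reachable
    exact (hG.2 _ H hminor hcardW) Finset.univ
      ⟨twoConnected_induce_univ h2H, twoConnected_induce_univ_compl h2Hc⟩
end
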